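/- arXiv:2007.10704 — 8 statements merged into one kernel-verified Lean document; each statement's English description precedes it below -/
import Mathlib

section
/- Let n be an even positive integer and let M_1, …, M_r be pairwise edge-disjoint perfect matchings of the complete graph K_n with r ≤ n/2 − 1. Then there exists a perfect matching of K_n that is edge-disjoint from every M_i. (Consequently, the greedy algorithm that repeatedly deletes perfect matchings from K_n always completes at least n/2 rounds.) -/
/-- A simple graph on `V` is a perfect matching (of the complete graph on `V`)
if every vertex has exactly one neighbor. -/
def IsPM {V : Type} (M : SimpleGraph V) : Prop := ∀ v : V, ∃! w : V, M.Adj v w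

open Finset

section Aux
open scoped Classical

variable {n : ℕ}

/-- The set of matched vertices of a partial-matching involution. -/
noncomputable def mSet (f : Fin n → Fin n) : Finset (Fin n) :=
  Finset.univ.filter (fun v => f v ≠ v)

lemma mem_mSet {f : Fin n → Fin n} {v : Fin n} : v ∈ mSet f ↔ f v ≠ v := by
  simp [mSet]

variable (G : SimpleGraph (Fin n))

/-- Unmatch a matched pair `x, y`. -/
lemma unmatch (f : Fin n → Fin n) (hinv : ∀ v, f (f v) = v)
    (hadj : ∀ v, f v ≠ v → G.Adj v (f v)) (x y : Fin n) (hxy : f x = y) (hne : x ≠ y) :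
    ∃ h : Fin n → Fin n, (∀ v, h (h v) = v) ∧ (∀ v, h v ≠ v → G.Adj v (h v)) ∧
      mSet h = (mSet f) \ {x, y} := by
  have hyx : f y = x := by rw [← hxy, hinv]
  refine ⟨fun z => if z = x ∨ z = y then z else f z, ?_, ?_, ?_⟩
  · intro v
    by_cases hv : v = x ∨ v = y
    · simp [hv]
    · push_neg at hv
      have h1 : f v ≠ x := fun h => hv.2 (by rw [← hinv v, h, hxy])
      have h2 : f v ≠ y := fun h => hv.1 (by rw [← hinv v, h, hyx])
      simp [hv.1, hv.2, h1, h2, hinv]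
  · intro v hv
    by_cases h : v = x ∨ v = y
    · simp [h] at hv
    · simp only [h, if_false] at hv ⊢
      exact hadj v hv
  · ext v
    by_cases h : v = x ∨ v = y
    · rcases h with h | h <;> simp [mem_mSet, h, hxy, hyx]
    · push_neg at h
      simp [mem_mSet, h.1, h.2, (by simp [h] : (v = x ∨ v = y) = False)]

/-- Match two unmatched adjacent vertices `a, b`. -/
lemma matchpair (f : Fin n → Fin n) (hinv : ∀ v, f (f v) = v)
    (hadj : ∀ v, f v ≠ v → G.Adj v (f v)) (a b : Fin n) (ha : f a = a) (hb : f b = b)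
    (hab : G.Adj a b) :
    ∃ h : Fin n → Fin n, (∀ v, h (h v) = v) ∧ (∀ v, h v ≠ v → G.Adj v (h v)) ∧
      mSet h = insert a (insert b (mSet f)) := by
  have hne : a ≠ b := G.ne_of_adj hab
  refine ⟨fun z => if z = a then b else if z = b then a else f z, ?_, ?_, ?_⟩
  · intro v
    by_cases hva : v = a
    · simp [hva, hne.symm, hne]
    · by_cases hvb : v = b
      · simp [hvb, hne, hne.symm]
      · have h1 : f v ≠ a := fun h => hva (by rw [← ha, ← h, hinv])
        have h2 : f v ≠ b := fun h => hvb (by rw [← hb, ← h, hinv])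
        simp [hva, hvb, h1, h2, hinv]
  · intro v hv
    by_cases hva : v = a
    · simpa [hva, hne] using hab
    · by_cases hvb : v = b
      · simpa [hvb, hne.symm, hne] using hab.symm
      · simp only [hva, hvb, if_false] at hv ⊢
        exact hadj v hv
  · ext v
    by_cases hva : v = a
    · simp [mem_mSet, hva, hne, hne.symm]
    · by_cases hvb : v = b
      · simp [mem_mSet, hvb, hne, hne.symm]
      · simp [mem_mSet, hva, hvb]

end Aux

section Grow
open scoped Classical
variable {n : ℕ} (G : SimpleGraph (Fin n))

set_option maxHeartbeats 1000000 in
lemma grow (hne : Even n) (hdeg : ∀ v, n ≤ 2 * (univ.filter (G.Adj v)).card)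
    (f : Fin n → Fin n) (hinv : ∀ v, f (f v) = v)
    (hadj : ∀ v, f v ≠ v → G.Adj v (f v))
    (hev : Even (mSet f).card)
    (u : Fin n) (hu : f u = u) :
    ∃ h : Fin n → Fin n, (∀ v, h (h v) = v) ∧ (∀ v, h v ≠ v → G.Adj v (h v)) ∧
      (mSet h).card = (mSet f).card + 2 := by
  by_cases hcase : ∃ a b, f a = a ∧ f b = b ∧ G.Adj a b
  · obtain ⟨a, b, ha, hb, hab⟩ := hcase
    obtain ⟨h, h1, h2, h3⟩ := matchpair G f hinv hadj a b ha hb hab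
    refine ⟨h, h1, h2, ?_⟩
    have hbS : b ∉ mSet f := by simp [mem_mSet, hb]
    have haS : a ∉ insert b (mSet f) := by
      simp [mem_mSet, ha, G.ne_of_adj hab]
    rw [h3, card_insert_of_notMem haS, card_insert_of_notMem hbS]
  · push_neg at hcase
    -- find a second unmatched vertex
    have hcardU : (mSet f).card + (univ.filter (fun v => ¬ f v ≠ v)).card = n := by
      simpa [mSet] using card_filter_add_card_filter_not (s := (univ : Finset (Fin n)))
        (p := fun v => f v ≠ v)
    set U := univ.filter (fun v : Fin n => ¬ f v ≠ v) with hU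
    have hUeven : Even U.card := by
      rcases hne with ⟨c, hc⟩; rcases hev with ⟨d, hd⟩
      refine ⟨c - d, ?_⟩; omega
    have huU : u ∈ U := by simp [hU, hu]
    have hU2 : 1 < U.card := by
      have : 0 < U.card := card_pos.mpr ⟨u, huU⟩
      rcases hUeven with ⟨c, hc⟩; omega
    obtain ⟨v, hvU, hvu⟩ := exists_mem_ne hU2 u
    have hv : f v = v := by simpa [hU] using hvU
    -- all neighbours of u and v are matched
    have hNu : ∀ w, G.Adj u w → w ∈ mSet f := by
      intro w hw
      rw [mem_mSet]
      intro hfw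
      exact hcase u w hu hfw hw
    have hNv : ∀ w, G.Adj v w → w ∈ mSet f := by
      intro w hw
      rw [mem_mSet]
      intro hfw
      exact hcase v w hv hfw hw
    have huS : u ∉ mSet f := by simp [mem_mSet, hu]
    have hvS : v ∉ mSet f := by simp [mem_mSet, hv]
    -- |S| ≤ n - 2
    have hScard : (mSet f).card + 2 ≤ n := by
      have hsub : mSet f ⊆ univ \ {u, v} := by
        intro w hw
        simp only [mem_sdiff, mem_univ, true_and, mem_insert, mem_singleton]
        rintro (rfl | rfl)
        exacts [huS hw, hvS hw]
      have := card_le_card hsub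
      have h2 : ({u, v} : Finset (Fin n)).card = 2 := by
        rw [card_insert_of_notMem (by simpa using hvu.symm), card_singleton]
      have := card_sdiff_of_subset (subset_univ ({u, v} : Finset (Fin n)))
      simp only [card_univ, Fintype.card_fin] at this
      have hn2 : 2 ≤ n := by
        have := card_le_univ ({u, v} : Finset (Fin n))
        simp only [card_univ, Fintype.card_fin] at this
        omega
      omega
    -- weight function and counting
    set W : Fin n → ℕ := fun x => (if G.Adj u x then 1 else 0) + (if G.Adj v x then 1 else 0)
      with hW
    have hsumW : n ≤ ∑ x ∈ mSet f, W x := by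
      have e1 : ∑ x ∈ mSet f, W x
          = ((mSet f).filter (G.Adj u)).card + ((mSet f).filter (G.Adj v)).card := by
        rw [hW, sum_add_distrib]
        simp [sum_boole]
      have e2 : (mSet f).filter (G.Adj u) = univ.filter (G.Adj u) := by
        ext w; simp only [mem_filter, mem_univ, true_and, and_iff_right_iff_imp]
        exact hNu w
      have e3 : (mSet f).filter (G.Adj v) = univ.filter (G.Adj v) := by
        ext w; simp only [mem_filter, mem_univ, true_and, and_iff_right_iff_imp]
        exact hNv w
      have d1 := hdeg u
      have d2 := hdeg v
      rw [e1, e2, e3]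
      omega
    have hfix : ∑ x ∈ mSet f, W (f x) = ∑ x ∈ mSet f, W x := by
      refine sum_nbij' (fun x => f x) (fun x => f x) ?_ ?_ ?_ ?_ ?_
      · intro a ha; rw [mem_mSet] at ha ⊢; rw [hinv]; exact fun h => ha h.symm
      · intro a ha; rw [mem_mSet] at ha ⊢; rw [hinv]; exact fun h => ha h.symm
      · intro a _; exact hinv a
      · intro a _; exact hinv a
      · intro a _; rfl
    have hkey : ∃ x ∈ mSet f, 3 ≤ W x + W (f x) := by
      by_contra hc
      push_neg at hc
      have hb : ∑ x ∈ mSet f, (W x + W (f x)) ≤ 2 * (mSet f).card := by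
        calc ∑ x ∈ mSet f, (W x + W (f x)) ≤ ∑ _x ∈ mSet f, 2 :=
              sum_le_sum (fun x hx => by have := hc x hx; omega)
          _ = 2 * (mSet f).card := by rw [sum_const]; ring
      rw [sum_add_distrib, hfix] at hb
      omega
    obtain ⟨x, hxS, hWx⟩ := hkey
    set y := f x with hy
    have hfxy : f x = y := rfl
    have hfyx : f y = x := by rw [hy, hinv]
    have hxyne : x ≠ y := fun h => mem_mSet.mp hxS (by rw [← hy]; exact h.symm)
    have hyS : y ∈ mSet f := by rw [mem_mSet, hfyx]; exact hxyne
    -- the generic augment construction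
    have hmain : ∀ a b : Fin n, a ∈ mSet f → f a = b → G.Adj u a → G.Adj v b →
        ∃ h : Fin n → Fin n, (∀ w, h (h w) = w) ∧ (∀ w, h w ≠ w → G.Adj w (h w)) ∧
          (mSet h).card = (mSet f).card + 2 := by
      intro a b haS hfab hua hvb
      have habne : a ≠ b := by
        have := mem_mSet.mp haS
        rw [hfab] at this
        exact fun h => this h.symm
      have hbS : b ∈ mSet f := by rw [mem_mSet, ← hfab, hinv, hfab]; exact habne
      have hau : a ≠ u := fun h => huS (h ▸ haS)
      have hbu : b ≠ u := fun h => huS (h ▸ hbS)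
      have hav : a ≠ v := fun h => hvS (h ▸ haS)
      have hbv : b ≠ v := fun h => hvS (h ▸ hbS)
      obtain ⟨h₁, hi₁, ha₁, hm₁⟩ := unmatch G f hinv hadj a b hfab habne
      have fix₁ : ∀ w, w ∉ mSet f ∨ w = a ∨ w = b → h₁ w = w := by
        intro w hw
        have : w ∉ mSet h₁ := by
          rw [hm₁, mem_sdiff]
          rintro ⟨hw1, hw2⟩
          simp only [mem_insert, mem_singleton, not_or] at hw2
          tauto
        rwa [mem_mSet, not_not] at this
      obtain ⟨h₂, hi₂, ha₂, hm₂⟩ := matchpair G h₁ hi₁ ha₁ u a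
        (fix₁ u (Or.inl huS)) (fix₁ a (Or.inr (Or.inl rfl))) hua
      have fix₂ : ∀ w, w ≠ u → w ≠ a → w ∉ mSet h₁ → h₂ w = w := by
        intro w hw1 hw2 hw3
        have : w ∉ mSet h₂ := by
          rw [hm₂]
          simp only [mem_insert, not_or]
          exact ⟨hw1, hw2, hw3⟩
        rwa [mem_mSet, not_not] at this
      have hvb' : v ∉ mSet h₁ := by rw [hm₁, mem_sdiff]; tauto
      have hbb' : b ∉ mSet h₁ := by
        rw [hm₁, mem_sdiff]; simp
      obtain ⟨h₃, hi₃, ha₃, hm₃⟩ := matchpair G h₂ hi₂ ha₂ v b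
        (fix₂ v hvu (Ne.symm hav) hvb') (fix₂ b hbu (Ne.symm habne) hbb') hvb
      refine ⟨h₃, hi₃, ha₃, ?_⟩
      have hset : mSet h₃ = insert u (insert v (mSet f)) := by
        rw [hm₃, hm₂, hm₁]
        ext w
        simp only [mem_insert, mem_sdiff, mem_singleton, not_or]
        constructor
        · rintro (rfl | rfl | rfl | rfl | ⟨hS, -, -⟩) <;> tauto
        · rintro (rfl | rfl | hS)
          · tauto
          · tauto
          · by_cases hwa : w = a
            · tauto
            · by_cases hwb : w = b <;> tauto
      have hu' : u ∉ insert v (mSet f) := by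
        simp only [mem_insert, not_or]
        exact ⟨fun h => hvu h.symm, huS⟩
      rw [hset, card_insert_of_notMem hu', card_insert_of_notMem hvS]
    -- extract the cross pair from the weight bound
    have hcross : (G.Adj u x ∧ G.Adj v y) ∨ (G.Adj u y ∧ G.Adj v x) := by
      rw [hW] at hWx
      by_cases h1 : G.Adj u x <;> by_cases h2 : G.Adj v x <;>
        by_cases h3 : G.Adj u y <;> by_cases h4 : G.Adj v y <;>
        simp only [h1, h2, h3, h4, ← hy, if_true, if_false] at hWx ⊢ <;>
        tauto
    rcases hcross with ⟨c1, c2⟩ | ⟨c1, c2⟩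
    · exact hmain x y hxS hfxy c1 c2
    · exact hmain y x hyS hfyx c1 c2

end Grow

section Main
open scoped Classical

lemma exists_pm_involution (n : ℕ) (hne : Even n) (G : SimpleGraph (Fin n))
    (hdeg : ∀ v, n ≤ 2 * (univ.filter (G.Adj v)).card) :
    ∃ f : Fin n → Fin n, (∀ v, f (f v) = v) ∧ ∀ v, f v ≠ v ∧ G.Adj v (f v) := by
  have key : ∀ k (f : Fin n → Fin n), (∀ v, f (f v) = v) → (∀ v, f v ≠ v → G.Adj v (f v)) →
      Even (mSet f).card → n ≤ (mSet f).card + 2 * k →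
      ∃ g : Fin n → Fin n, (∀ v, g (g v) = v) ∧ ∀ v, g v ≠ v ∧ G.Adj v (g v) := by
    intro k
    induction k with
    | zero =>
      intro f hinv hadj _ hle
      have hS : mSet f = univ := by
        apply eq_univ_of_card
        have h1 := card_le_univ (mSet f)
        simp only [card_univ, Fintype.card_fin] at h1 ⊢
        omega
      refine ⟨f, hinv, fun v => ?_⟩
      have hv : f v ≠ v := mem_mSet.mp (hS ▸ mem_univ v)
      exact ⟨hv, hadj v hv⟩
    | succ k ih =>
      intro f hinv hadj hev hle
      by_cases hex : ∃ u, f u = u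
      · obtain ⟨u, hu⟩ := hex
        obtain ⟨h, h1, h2, h3⟩ := grow G hne hdeg f hinv hadj hev u hu
        refine ih h h1 h2 ?_ ?_
        · rw [h3]; exact hev.add even_two
        · omega
      · push_neg at hex
        exact ⟨f, hinv, fun v => ⟨hex v, hadj v (hex v)⟩⟩
  obtain ⟨c, hc⟩ := hne
  have h0 : mSet (id : Fin n → Fin n) = ∅ := by
    ext v; simp [mem_mSet]
  exact key c id (fun _ => rfl) (fun v hv => absurd rfl hv)
    (by rw [h0]; simp) (by rw [h0]; simp; omega)

end Main


section Final
open scoped Classical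

/-- If `M_1, …, M_r` are pairwise edge-disjoint perfect matchings of `K_n`
(`n` even, positive) with `r ≤ n/2 - 1`, then there is a perfect matching of
`K_n` edge-disjoint from every `M_i`. -/
theorem greedy_matching_lower_bound (n : ℕ) (hn : 0 < n) (heven : Even n)
    (r : ℕ) (hr : r ≤ n / 2 - 1)
    (M : Fin r → SimpleGraph (Fin n))
    (hM : ∀ i, IsPM (M i))
    (hdisj : ∀ i j : Fin r, i ≠ j → Disjoint (M i).edgeSet (M j).edgeSet) :
    ∃ N : SimpleGraph (Fin n), IsPM N ∧ ∀ i, Disjoint N.edgeSet (M i).edgeSet := by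
  obtain ⟨m, hm⟩ := heven
  set G : SimpleGraph (Fin n) := ⊤ \ (⨆ i, M i) with hG
  have hGadj : ∀ v w, G.Adj v w ↔ v ≠ w ∧ ∀ i, ¬ (M i).Adj v w := by
    intro v w
    rw [hG, SimpleGraph.sdiff_adj, SimpleGraph.top_adj, SimpleGraph.iSup_adj]
    push_neg
    rfl
  have hdeg : ∀ v, n ≤ 2 * (univ.filter (G.Adj v)).card := by
    intro v
    set P : Fin r → Fin n := fun i => (hM i v).choose with hP
    have hPs : ∀ i, (M i).Adj v (P i) ∧ ∀ w, (M i).Adj v w → w = P i := fun i =>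
      (hM i v).choose_spec
    have hpart := card_filter_add_card_filter_not (s := (univ : Finset (Fin n)))
      (p := G.Adj v)
    simp only [card_univ, Fintype.card_fin] at hpart
    have hsub : univ.filter (fun w => ¬ G.Adj v w) ⊆ insert v ((univ : Finset (Fin r)).image P) := by
      intro w hw
      simp only [mem_filter, mem_univ, true_and] at hw
      rw [hGadj] at hw
      push_neg at hw
      rcases eq_or_ne v w with rfl | hne
      · exact mem_insert_self _ _
      · obtain ⟨i, hi⟩ := hw hne
        have : w = P i := (hPs i).2 w hi
        exact mem_insert_of_mem (mem_image.mpr ⟨i, mem_univ i, this.symm⟩)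
    have hBle : (univ.filter (fun w => ¬ G.Adj v w)).card ≤ 1 + r := by
      calc (univ.filter (fun w => ¬ G.Adj v w)).card
          ≤ (insert v ((univ : Finset (Fin r)).image P)).card := card_le_card hsub
        _ ≤ 1 + ((univ : Finset (Fin r)).image P).card := by
            rw [add_comm]; exact card_insert_le _ _
        _ ≤ 1 + r := by
            have := card_image_le (s := (univ : Finset (Fin r))) (f := P)
            simp only [card_univ, Fintype.card_fin] at this
            omega
    omega
  have hdeg' : ∀ v : Fin n,
      n ≤ 2 * (@Finset.filter _ (G.Adj v) (fun a => Classical.propDecidable _) Finset.univ).card := by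
    intro v
    have heq : (@Finset.filter _ (G.Adj v) (fun a => Classical.propDecidable _) Finset.univ)
        = Finset.univ.filter (G.Adj v) := by
      congr 1
    rw [heq]
    exact hdeg v
  obtain ⟨f, hfinv, hf⟩ := exists_pm_involution n ⟨m, hm⟩ G hdeg'
  refine ⟨SimpleGraph.fromRel (fun a b => f a = b), ?_, ?_⟩
  · intro v
    refine ⟨f v, ⟨(hf v).1.symm ∘ Eq.symm ∘ Eq.symm, Or.inl rfl⟩, ?_⟩
    · rintro w ⟨hne, hw | hw⟩
      · exact hw.symm
      · rw [← hw, hfinv]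
  · intro i
    rw [Set.disjoint_left]
    intro e he hem
    induction e with
    | h a b =>
      rw [SimpleGraph.mem_edgeSet, SimpleGraph.fromRel_adj] at he
      obtain ⟨hab, hor⟩ := he
      have hGab : G.Adj a b := by
        rcases hor with h | h
        · rw [← h]; exact (hf a).2
        · rw [← h]; exact ((hf b).2).symm
      rw [SimpleGraph.mem_edgeSet] at hem
      exact ((hGadj a b).mp hGab).2 i hem

end Final
end

section
/- For every even positive integer n such that n/2 is odd, there exist n/2 pairwise edge-disjoint perfect matchings M_1, …, M_{n/2} of the complete graph K_n such that no perfect matching of K_n is edge-disjoint from all of them. In particular, there are infinitely many n for which a tournament with n/2 rounds exists that cannot be extended. -/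
lemma mod_helper (m i t : ℕ) (hi : i ≤ m) (ht : t < m) :
    ((t + (m - i)) % m + i) % m = t := by
  rw [Nat.mod_add_mod, Nat.add_assoc, Nat.sub_add_cancel hi, Nat.add_mod_right,
    Nat.mod_eq_of_lt ht]

lemma mod_inj (m i a b : ℕ) (ha : a < m) (hb : b < m)
    (h : (a + i) % m = (b + i) % m) : a = b := by
  have h2 : a % m = b % m := Nat.ModEq.add_right_cancel' i h
  rwa [Nat.mod_eq_of_lt ha, Nat.mod_eq_of_lt hb] at h2



/-- For every even positive `n` with `n/2` odd, there are `n/2` pairwise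
edge-disjoint perfect matchings of `K_n` such that no perfect matching of `K_n`
is edge-disjoint from all of them. -/
theorem matching_upper_bound_example (n : ℕ) (hn : 0 < n) (heven : Even n)
    (hodd : Odd (n / 2)) :
    ∃ M : Fin (n / 2) → SimpleGraph (Fin n),
      (∀ i, IsPM (M i)) ∧
      (∀ i j : Fin (n / 2), i ≠ j → Disjoint (M i).edgeSet (M j).edgeSet) ∧
      ¬ ∃ N : SimpleGraph (Fin n), IsPM N ∧ ∀ i, Disjoint N.edgeSet (M i).edgeSet := by
  classical
  set m := n / 2 with hmdef
  have hm : m + m = n := by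
    have := Nat.even_iff.mp heven
    omega
  have hm0 : 0 < m := hodd.pos
  -- the relation defining matching i
  set r : Fin m → Fin n → Fin n → Prop :=
    fun i v w => (v : ℕ) < m ∧ (w : ℕ) = m + ((v : ℕ) + (i : ℕ)) % m with hrdef
  refine ⟨fun i => SimpleGraph.fromRel (r i), ?_, ?_, ?_⟩
  · -- each is a perfect matching
    intro i v
    rcases lt_or_ge (v : ℕ) m with hv | hv
    · refine ⟨⟨m + ((v : ℕ) + (i : ℕ)) % m, by
        have := Nat.mod_lt ((v : ℕ) + (i : ℕ)) hm0; omega⟩, ?_, ?_⟩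
      · refine ⟨?_, Or.inl ⟨hv, rfl⟩⟩
        intro hvw
        have : (v : ℕ) = m + ((v : ℕ) + (i : ℕ)) % m := congrArg Fin.val hvw
        omega
      · rintro w ⟨hne, h | h⟩
        · exact Fin.ext h.2
        · exfalso; obtain ⟨hw, hv2⟩ := h; omega
    · -- v in the high half: unique neighbor is ((v - m) + (m - i)) % m
      have hvlt : (v : ℕ) - m < m := by omega
      refine ⟨⟨((v : ℕ) - m + (m - (i : ℕ))) % m, by
        have := Nat.mod_lt ((v : ℕ) - m + (m - (i : ℕ))) hm0; omega⟩, ?_, ?_⟩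
      · constructor
        · intro hvw
          have : (v : ℕ) = ((v : ℕ) - m + (m - (i : ℕ))) % m := by
            have := congrArg Fin.val hvw
            simpa using this
          have := Nat.mod_lt ((v : ℕ) - m + (m - (i : ℕ))) hm0
          omega
        · refine Or.inr ⟨Nat.mod_lt _ hm0, ?_⟩
          simp only [Fin.val_mk]
          have := mod_helper m (i : ℕ) ((v : ℕ) - m) (le_of_lt i.isLt) hvlt
          omega
      · rintro w ⟨hne, h | h⟩
        · exfalso; obtain ⟨hv2, _⟩ := h; omega
        · obtain ⟨hw, hv2⟩ := h
          apply Fin.ext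
          have key : ((w : ℕ) + (i : ℕ)) % m =
              ((((v : ℕ) - m + (m - (i : ℕ))) % m) + (i : ℕ)) % m := by
            rw [mod_helper m (i : ℕ) ((v : ℕ) - m) (le_of_lt i.isLt) hvlt]
            omega
          exact mod_inj m (i : ℕ) (w : ℕ) _ hw (Nat.mod_lt _ hm0) key
  · -- pairwise disjoint
    intro i j hij
    rw [Set.disjoint_left]
    intro e hei hej
    induction e with
    | h v w =>
      rw [SimpleGraph.mem_edgeSet, SimpleGraph.fromRel_adj] at hei hej
      obtain ⟨-, hi | hi⟩ := hei <;> obtain ⟨-, hj | hj⟩ := hej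
      · apply hij; apply Fin.ext
        refine mod_inj m (v : ℕ) (i : ℕ) (j : ℕ) i.isLt j.isLt ?_
        rw [Nat.add_comm (i : ℕ), Nat.add_comm (j : ℕ)]
        omega
      · obtain ⟨hv, hw⟩ := hi; obtain ⟨hw2, hv2⟩ := hj
        have := Nat.mod_lt ((v : ℕ) + (i : ℕ)) hm0; omega
      · obtain ⟨hw, hv⟩ := hi; obtain ⟨hv2, hw2⟩ := hj
        have := Nat.mod_lt ((v : ℕ) + (j : ℕ)) hm0; omega
      · apply hij; apply Fin.ext
        refine mod_inj m (w : ℕ) (i : ℕ) (j : ℕ) i.isLt j.isLt ?_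
        rw [Nat.add_comm (i : ℕ), Nat.add_comm (j : ℕ)]
        omega
  · -- no extension
    rintro ⟨N, hN, hdisj⟩
    -- side preservation
    have side : ∀ v w : Fin n, N.Adj v w → (v : ℕ) < m → (w : ℕ) < m := by
      intro v w hvw hv
      by_contra hw
      push_neg at hw
      have hwlt : (w : ℕ) - m < m := by have := w.isLt; omega
      set i : Fin m := ⟨((w : ℕ) - m + (m - (v : ℕ))) % m, Nat.mod_lt _ hm0⟩ with hidef
      have hepm : s(v, w) ∈ (SimpleGraph.fromRel (r i)).edgeSet := by
        rw [SimpleGraph.mem_edgeSet, SimpleGraph.fromRel_adj]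
        refine ⟨hvw.ne, Or.inl ⟨hv, ?_⟩⟩
        have : ((i : ℕ) + (v : ℕ)) % m = (w : ℕ) - m := by
          have := mod_helper m (v : ℕ) ((w : ℕ) - m) (le_of_lt hv) hwlt
          simpa [hidef] using this
        rw [Nat.add_comm ((v : ℕ)) ((i : ℕ))]
        omega
      exact (hdisj i).le_bot ⟨hvw, hepm⟩
    -- build a matching subgraph on the low half
    set S : N.Subgraph :=
      { verts := {v : Fin n | (v : ℕ) < m}
        Adj := fun v w => N.Adj v w ∧ (v : ℕ) < m ∧ (w : ℕ) < m
        adj_sub := fun h => h.1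
        edge_vert := fun h => h.2.1
        symm := ⟨fun v w h => ⟨h.1.symm, h.2.2, h.2.1⟩⟩ } with hSdef
    have hmatch : S.IsMatching := by
      intro v hv
      obtain ⟨w, hw, huniq⟩ := hN v
      refine ⟨w, ⟨hw, hv, side v w hw hv⟩, fun w' hw' => huniq w' hw'.1⟩
    have heven := hmatch.even_card
    have hcard : S.verts.toFinset.card = m := by
      simp only [hSdef, Set.toFinset_setOf]
      have hmn : m < n := by omega
      have : (Finset.filter (fun x : Fin n => (x : ℕ) < m) Finset.univ)
          = Finset.Iio (⟨m, hmn⟩ : Fin n) := by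
        ext x; simp [Fin.lt_def]
      rw [this, Fin.card_Iio]
    rw [hcard] at heven
    exact ((Nat.not_even_iff_odd (n := m)).mpr hodd) heven
end

section
/- Let n be an even positive integer, let M_1, …, M_{n/2} be pairwise edge-disjoint perfect matchings of the complete graph K_n, and let G be the feasibility graph of this tournament. Then G contains no perfect matching if and only if n/2 is odd and the complement of G is the complete bipartite graph K_{n/2, n/2}, i.e., there exists a set A of exactly n/2 vertices such that the edges lying in some M_i are exactly the pairs {a, b} with a ∈ A and b ∉ A. -/
set_option linter.unusedSectionVars false
set_option maxHeartbeats 1000000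


lemma even_card_invol {α : Type*} [DecidableEq α] (f : α → α) (s : Finset α)
    (h : ∀ x ∈ s, f x ∈ s ∧ f (f x) = x ∧ f x ≠ x) : Even s.card := by
  induction s using Finset.strongInduction with
  | _ s ih =>
    rcases s.eq_empty_or_nonempty with rfl | ⟨x, hx⟩
    · simp
    obtain ⟨hfx, hffx, hne⟩ := h x hx
    set s' := s \ {x, f x} with hs'
    have hsub : ({x, f x} : Finset α) ⊆ s := by
      intro z hz; simp at hz; rcases hz with rfl | rfl <;> assumption
    have hss : s' ⊂ s := by
      apply Finset.sdiff_ssubset hsub; simp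
    have hcard : s'.card = s.card - 2 := by
      rw [hs', Finset.card_sdiff_of_subset hsub, Finset.card_insert_of_notMem (by simp [Ne.symm hne]),
        Finset.card_singleton]
    have h2 : 2 ≤ s.card := by
      calc 2 = ({x, f x} : Finset α).card := by
              rw [Finset.card_insert_of_notMem (by simp [Ne.symm hne]), Finset.card_singleton]
           _ ≤ s.card := Finset.card_le_card hsub
    have hev : Even s'.card := by
      apply ih s' hss
      intro w hw
      rw [hs'] at hw
      simp only [Finset.mem_sdiff, Finset.mem_insert, Finset.mem_singleton] at hw
      obtain ⟨hws, hw1⟩ := hw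
      rw [not_or] at hw1
      obtain ⟨hfw, hffw, hnew⟩ := h w hws
      refine ⟨?_, hffw, hnew⟩
      rw [hs']
      simp only [Finset.mem_sdiff, Finset.mem_insert, Finset.mem_singleton]
      refine ⟨hfw, fun hc => ?_⟩
      rcases hc with hfwx | hfwfx
      · apply hw1.2; rw [← hfwx, hffw]
      · apply hw1.1; rw [← hffx, ← hfwfx, hffw]
    obtain ⟨m, hm⟩ := hev
    exact ⟨m + 1, by omega⟩


section Aux
variable {n : ℕ} (G : SimpleGraph (Fin n)) [DecidableRel G.Adj]

lemma pm_of_invol (q : Fin n → Fin n) (hinv : ∀ w, q (q w) = w)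
    (hadj : ∀ w, G.Adj w (q w)) : ∃ N : SimpleGraph (Fin n), IsPM N ∧ N ≤ G := by
  refine ⟨⟨fun x y => y = q x, ?_, ?_⟩, ?_, ?_⟩
  · refine ⟨fun x y h => ?_⟩; rw [h, hinv]
  · refine ⟨fun x h => ?_⟩; have := hadj x; rw [← h] at this; exact G.irrefl this
  · intro v; exact ⟨q v, rfl, fun y hy => hy⟩
  · intro x y h; exact h ▸ hadj x

lemma key (hnop : ¬ ∃ N : SimpleGraph (Fin n), IsPM N ∧ N ≤ G)
    (u v : Fin n) (huv : u ≠ v) (p : Fin n → Fin n)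
    (hp : ∀ w, w ≠ u → w ≠ v → p (p w) = w ∧ G.Adj w (p w) ∧ p w ≠ u ∧ p w ≠ v)
    (k : ℕ) (hn : n = 2 * k + 2) (hreg : ∀ w, (G.neighborFinset w).card = k) :
    ¬ G.Adj u v ∧ ∀ w, w ≠ u → w ≠ v → (G.Adj u w ↔ ¬ G.Adj v (p w)) := by
  have hne : ¬ G.Adj u v := by
    intro hadj
    apply hnop
    apply pm_of_invol G (fun z => if z = u then v else if z = v then u else p z)
    · intro w
      by_cases hwu : w = u
      · subst hwu; simp [Ne.symm huv]
      · by_cases hwv : w = v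
        · subst hwv; simp [Ne.symm huv, hwu]
        · obtain ⟨h1, _, h3, h4⟩ := hp w hwu hwv
          simp [hwu, hwv, h3, h4, h1]
    · intro w
      by_cases hwu : w = u
      · subst hwu; simpa [Ne.symm huv] using hadj
      · by_cases hwv : w = v
        · subst hwv; simpa [Ne.symm huv, hwu] using hadj.symm
        · obtain ⟨_, h2, _, _⟩ := hp w hwu hwv
          simpa [hwu, hwv] using h2
  have haug : ∀ w, w ≠ u → w ≠ v → G.Adj u w → ¬ G.Adj v (p w) := by
    intro w hwu hwv huw hvpw
    obtain ⟨hpp, hwpw, hpwu, hpwv⟩ := hp w hwu hwv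
    have hwpw' : w ≠ p w := hwpw.ne
    apply hnop
    apply pm_of_invol G (fun z =>
      if z = u then w else if z = w then u else
      if z = v then p w else if z = p w then v else p z)
    · intro z
      by_cases hzu : z = u
      · subst hzu; simp [hwu, Ne.symm huv, hwv, hwpw']
      by_cases hzw : z = w
      · subst hzw; simp [hwu, Ne.symm huv, huv, hwv]
      by_cases hzv : z = v
      · subst hzv; simp [Ne.symm huv, hpwu, Ne.symm hwpw', hpwv, hwv, Ne.symm hwv]
      by_cases hzpw : z = p w
      · subst hzpw; simp [hpwu, Ne.symm hwpw', hpwv, Ne.symm huv, hwv, Ne.symm hwv]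
      · obtain ⟨h1, _, h3, h4⟩ := hp z hzu hzv
        have h5 : p z ≠ w := fun hc => hzpw (by rw [← h1, hc])
        have h6 : p z ≠ p w := fun hc => hzw (by rw [← h1, hc, hpp])
        simp [hzu, hzw, hzv, hzpw, h3, h5, h4, h6, h1]
    · intro z
      by_cases hzu : z = u
      · subst hzu; simpa [hwu] using huw
      by_cases hzw : z = w
      · subst hzw; simpa [hwu] using huw.symm
      by_cases hzv : z = v
      · subst hzv; simpa [Ne.symm huv, Ne.symm hwv] using hvpw
      by_cases hzpw : z = p w
      · subst hzpw; simpa [hpwu, Ne.symm hwpw', hpwv] using hvpw.symm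
      · obtain ⟨_, h2, _, _⟩ := hp z hzu hzv
        simpa [hzu, hzw, hzv, hzpw] using h2
  refine ⟨hne, fun w hwu hwv => ?_⟩
  refine ⟨haug w hwu hwv, fun hnvpw => ?_⟩
  -- counting argument
  set P : Finset (Fin n) := Finset.univ \ {u, v} with hP
  have hPcard : P.card = 2 * k := by
    rw [hP, Finset.card_sdiff_of_subset (by simp), Finset.card_univ]
    simp [Finset.card_insert_of_notMem, huv, hn]
  have hmemP : ∀ z, z ∈ P ↔ z ≠ u ∧ z ≠ v := by
    intro z; simp [hP, and_comm]
  have hTcard : (P.filter (fun w => G.Adj v (p w))).card = k := by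
    rw [← hreg v]
    apply Finset.card_bij (fun a _ => p a)
    · intro a ha
      rw [Finset.mem_filter] at ha
      rw [SimpleGraph.mem_neighborFinset]
      exact ha.2
    · intro a ha b hb hab
      rw [Finset.mem_filter, hmemP] at ha hb
      rw [← (hp a ha.1.1 ha.1.2).1, hab, (hp b hb.1.1 hb.1.2).1]
    · intro b hb
      rw [SimpleGraph.mem_neighborFinset] at hb
      have hbu : b ≠ u := fun hc => hne (hc ▸ hb).symm
      have hbv : b ≠ v := fun hc => G.irrefl (hc ▸ hb)
      obtain ⟨h1, _, h3, h4⟩ := hp b hbu hbv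
      refine ⟨p b, ?_, h1⟩
      rw [Finset.mem_filter, hmemP, h1]
      exact ⟨⟨h3, h4⟩, hb⟩
  have hBcard : (P.filter (fun w => ¬ G.Adj v (p w))).card = k := by
    have := Finset.card_filter_add_card_filter_not
      (s := P) (p := fun w => G.Adj v (p w))
    omega
  have hXB : G.neighborFinset u ⊆ P.filter (fun w => ¬ G.Adj v (p w)) := by
    intro x hx
    rw [SimpleGraph.mem_neighborFinset] at hx
    have hxu : x ≠ u := fun hc => G.irrefl (hc ▸ hx)
    have hxv : x ≠ v := fun hc => hne (hc ▸ hx)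
    rw [Finset.mem_filter, hmemP]
    exact ⟨⟨hxu, hxv⟩, haug x hxu hxv hx⟩
  have hXeq : G.neighborFinset u = P.filter (fun w => ¬ G.Adj v (p w)) :=
    Finset.eq_of_subset_of_card_le hXB (by rw [hBcard, hreg u])
  have : w ∈ G.neighborFinset u := by
    rw [hXeq, Finset.mem_filter, hmemP]
    exact ⟨⟨hwu, hwv⟩, hnvpw⟩
  rwa [SimpleGraph.mem_neighborFinset] at this


lemma exists_near (k : ℕ) (hn : n = 2 * k + 2)
    (hreg : ∀ w, (G.neighborFinset w).card = k) :
    ∀ m, m ≤ k → ∃ (D : Finset (Fin n)) (p : Fin n → Fin n), D.card = 2 * m ∧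
      ∀ w ∈ D, p w ∈ D ∧ p (p w) = w ∧ G.Adj w (p w) := by
  intro m
  induction m with
  | zero => exact fun _ => ⟨∅, id, by simp, by simp⟩
  | succ m ih =>
    intro hm
    obtain ⟨D, p, hcard, hD⟩ := ih (by omega)
    by_cases hedge : ∃ a, a ∉ D ∧ ∃ b, b ∉ D ∧ G.Adj a b
    · obtain ⟨a, ha, b, hb, hab⟩ := hedge
      have hne : a ≠ b := hab.ne
      refine ⟨insert a (insert b D), fun z => if z = a then b else if z = b then a else p z,
        ?_, ?_⟩
      · rw [Finset.card_insert_of_notMem (by simp [ha, hne]),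
          Finset.card_insert_of_notMem hb, hcard]
        ring
      · intro w hw
        simp only [Finset.mem_insert] at hw
        rcases hw with rfl | rfl | hwD
        · simp [hne, Ne.symm hne, hab, Finset.mem_insert]
        · simp [hne, Ne.symm hne, hab.symm, Finset.mem_insert]
        · have hwa : w ≠ a := fun hc => ha (hc ▸ hwD)
          have hwb : w ≠ b := fun hc => hb (hc ▸ hwD)
          obtain ⟨h1, h2, h3⟩ := hD w hwD
          have hpa : p w ≠ a := fun hc => ha (hc ▸ h1)
          have hpb : p w ≠ b := fun hc => hb (hc ▸ h1)
          simp only [if_neg hwa, if_neg hwb, if_neg hpa, if_neg hpb, h2, h3,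
            Finset.mem_insert, h1, or_true, and_true]
    · push_neg at hedge
      have hDc : 2 ≤ (Finset.univ \ D).card := by
        rw [Finset.card_sdiff_of_subset (Finset.subset_univ D), Finset.card_univ, Fintype.card_fin]
        omega
      obtain ⟨u', hu', v', hv', huv⟩ := Finset.one_lt_card.mp (show 1 < (Finset.univ \ D).card by omega)
      rw [Finset.mem_sdiff] at hu' hv'
      have hNu : G.neighborFinset u' ⊆ D := by
        intro z hz
        rw [SimpleGraph.mem_neighborFinset] at hz
        by_contra hzD
        exact hedge u' hu'.2 z hzD hz
      have hNv : G.neighborFinset v' ⊆ D := by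
        intro z hz
        rw [SimpleGraph.mem_neighborFinset] at hz
        by_contra hzD
        exact hedge v' hv'.2 z hzD hz
      have hinj : Set.InjOn p (G.neighborFinset v' : Set (Fin n)) := by
        intro a ha b hb hab
        simp only [Finset.coe_sort_coe, Finset.mem_coe] at ha hb
        rw [← (hD a (hNv ha)).2.1, hab, (hD b (hNv hb)).2.1]
      have hTcard : ((G.neighborFinset v').image p).card = k := by
        rw [Finset.card_image_of_injOn hinj, hreg]
      have hTD : (G.neighborFinset v').image p ⊆ D := by
        intro z hz
        rw [Finset.mem_image] at hz
        obtain ⟨y, hy, rfl⟩ := hz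
        exact (hD y (hNv hy)).1
      have hint : (G.neighborFinset u' ∩ (G.neighborFinset v').image p).Nonempty := by
        rw [← Finset.card_pos]
        have h1 := Finset.card_union_add_card_inter (G.neighborFinset u')
          ((G.neighborFinset v').image p)
        have h2 : (G.neighborFinset u' ∪ (G.neighborFinset v').image p).card ≤ D.card :=
          Finset.card_le_card (Finset.union_subset hNu hTD)
        rw [hreg u', hTcard] at h1
        omega
      obtain ⟨x, hx⟩ := hint
      rw [Finset.mem_inter, Finset.mem_image, SimpleGraph.mem_neighborFinset] at hx
      obtain ⟨hux, y, hy, hpy⟩ := hx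
      rw [SimpleGraph.mem_neighborFinset] at hy
      have hyD : y ∈ D := hNv (by rwa [SimpleGraph.mem_neighborFinset])
      obtain ⟨hpyD, hppy, hypy⟩ := hD y hyD
      have hxD : x ∈ D := hpy ▸ hpyD
      have hpx : p x = y := by rw [← hpy, hppy]
      have hxy : x ≠ y := by rw [← hpy]; exact fun hc => G.irrefl (hc ▸ hypy)
      have hxu : x ≠ u' := fun hc => hu'.2 (hc ▸ hxD)
      have hxv : x ≠ v' := fun hc => hv'.2 (hc ▸ hxD)
      have hyu : y ≠ u' := fun hc => hu'.2 (hc ▸ hyD)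
      have hyv : y ≠ v' := fun hc => hv'.2 (hc ▸ hyD)
      refine ⟨insert u' (insert v' D),
        fun z => if z = u' then x else if z = x then u' else
          if z = v' then y else if z = y then v' else p z, ?_, ?_⟩
      · rw [Finset.card_insert_of_notMem (by simp [hu'.2, huv]),
          Finset.card_insert_of_notMem hv'.2, hcard]
        ring
      · intro w hw
        have hvy : G.Adj v' y := hy
        simp only [Finset.mem_insert] at hw
        rcases hw with rfl | rfl | hwD
        · simp [hxu, hxD, hux]
        · simp [Ne.symm huv, Ne.symm hxv, hyu, Ne.symm hxy, hyv, hyD, hvy]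
        · by_cases hwx : w = x
          · subst hwx
            simp [hxu, hux.symm]
          by_cases hwy : w = y
          · subst hwy
            simp [hyu, Ne.symm hxy, hyv, Ne.symm huv, Ne.symm hxv, hvy.symm]
          · have hwu : w ≠ u' := fun hc => hu'.2 (hc ▸ hwD)
            have hwv : w ≠ v' := fun hc => hv'.2 (hc ▸ hwD)
            obtain ⟨h1, h2, h3⟩ := hD w hwD
            have hp1 : p w ≠ u' := fun hc => hu'.2 (hc ▸ h1)
            have hp2 : p w ≠ v' := fun hc => hv'.2 (hc ▸ h1)
            have hp3 : p w ≠ x := fun hc => hwy (by rw [← h2, hc, hpx])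
            have hp4 : p w ≠ y := fun hc => hwx (by rw [← h2, hc, hpy])
            simp only [if_neg hwu, if_neg hwx, if_neg hwv, if_neg hwy,
              if_neg hp1, if_neg hp3, if_neg hp2, if_neg hp4, Finset.mem_insert]
            exact ⟨Or.inr (Or.inr h1), h2, h3⟩
  
end Aux

section Aux2
variable {n : ℕ} (G : SimpleGraph (Fin n)) [DecidableRel G.Adj]

lemma swap_key (hnop : ¬ ∃ N : SimpleGraph (Fin n), IsPM N ∧ N ≤ G)
    (u v : Fin n) (huv : u ≠ v) (p : Fin n → Fin n)
    (hp : ∀ w, w ≠ u → w ≠ v → p (p w) = w ∧ G.Adj w (p w) ∧ p w ≠ u ∧ p w ≠ v)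
    (k : ℕ) (hn : n = 2 * k + 2) (hreg : ∀ w, (G.neighborFinset w).card = k)
    (hne : ¬ G.Adj u v) :
    ∀ x, G.Adj u x → ∀ w, w ≠ p x → w ≠ v →
      (G.Adj (p x) w ↔ ¬ G.Adj v (if w = u then x else if w = x then u else p w)) := by
  intro x hux
  have hxu : x ≠ u := hux.ne'
  have hxv : x ≠ v := fun hc => hne (hc ▸ hux)
  obtain ⟨hppx, hxpx, hpxu, hpxv⟩ := hp x hxu hxv
  have hxpx' : x ≠ p x := hxpx.ne
  have hmain := key G hnop (p x) v hpxv
    (fun z => if z = u then x else if z = x then u else p z) ?_ k hn hreg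
  · exact fun w hw1 hw2 => hmain.2 w hw1 hw2
  · intro w hw1 hw2
    by_cases hwu : w = u
    · subst hwu
      refine ⟨?_, ?_, ?_, ?_⟩ <;> simp [hxu, hux, hxpx', Ne.symm hxpx', hxv]
    by_cases hwx : w = x
    · subst hwx
      refine ⟨?_, ?_, ?_, ?_⟩ <;> simp [hxu, hux.symm, Ne.symm hpxu, huv]
    · obtain ⟨h1, h2, h3, h4⟩ := hp w hwu hw2
      have hpwx : p w ≠ x := fun hc => hw1 (by rw [← h1, hc])
      have hpwpx : p w ≠ p x := fun hc => hwx (by rw [← h1, hc, hppx])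
      refine ⟨?_, ?_, ?_, ?_⟩ <;> simp [hwu, hwx, h3, hpwx, h1, h2, h4, hpwpx]

lemma no_common (hnop : ¬ ∃ N : SimpleGraph (Fin n), IsPM N ∧ N ≤ G)
    (u v : Fin n) (huv : u ≠ v) (p : Fin n → Fin n)
    (hp : ∀ w, w ≠ u → w ≠ v → p (p w) = w ∧ G.Adj w (p w) ∧ p w ≠ u ∧ p w ≠ v)
    (k : ℕ) (hn : n = 2 * k + 2) (hreg : ∀ w, (G.neighborFinset w).card = k)
    (hne : ¬ G.Adj u v)
    (hkey : ∀ w, w ≠ u → w ≠ v → (G.Adj u w ↔ ¬ G.Adj v (p w))) :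
    ∀ a, G.Adj u a → G.Adj v a → False := by
  intro a hua hva
  have hau : a ≠ u := hua.ne'
  have hav : a ≠ v := hva.ne'
  have hswap := swap_key G hnop u v huv p hp k hn hreg hne
  have hclaim : ∀ x, G.Adj u x → p x ≠ a → G.Adj a (p x) := by
    intro x hux hpxa
    have h := hswap x hux a (fun hc => hpxa hc.symm) hav
    by_cases hax : a = x
    · subst hax
      rw [if_neg hau, if_pos rfl] at h
      exact (h.mpr (fun hc => hne hc.symm)).symm
    · rw [if_neg hau, if_neg hax] at h
      exact (h.mpr ((hkey a hau hav).mp hua)).symm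
  have hinj : Set.InjOn p ((G.neighborFinset u : Finset (Fin n)) : Set (Fin n)) := by
    intro x hx y hy hxy
    simp only [Finset.mem_coe, SimpleGraph.mem_neighborFinset] at hx hy
    have h1 := hp x hx.ne' (fun hc => hne (hc ▸ hx))
    have h2 := hp y hy.ne' (fun hc => hne (hc ▸ hy))
    rw [← h1.1, hxy, h2.1]
  have hTcard : ((G.neighborFinset u).image p).card = k := by
    rw [Finset.card_image_of_injOn hinj, hreg]
  have huT : u ∉ (G.neighborFinset u).image p := by
    rw [Finset.mem_image]
    rintro ⟨x, hx, hc⟩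
    rw [SimpleGraph.mem_neighborFinset] at hx
    exact (hp x hx.ne' (fun hc2 => hne (hc2 ▸ hx))).2.2.1 hc
  have hvT : v ∉ (G.neighborFinset u).image p := by
    rw [Finset.mem_image]
    rintro ⟨x, hx, hc⟩
    rw [SimpleGraph.mem_neighborFinset] at hx
    exact (hp x hx.ne' (fun hc2 => hne (hc2 ▸ hx))).2.2.2 hc
  have hSsub : insert u (insert v (((G.neighborFinset u).image p).erase a))
      ⊆ G.neighborFinset a := by
    intro z hz
    simp only [Finset.mem_insert] at hz
    rw [SimpleGraph.mem_neighborFinset]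
    rcases hz with rfl | rfl | hz
    · exact hua.symm
    · exact hva.symm
    · rw [Finset.mem_erase, Finset.mem_image] at hz
      obtain ⟨hza, x, hx, rfl⟩ := hz
      rw [SimpleGraph.mem_neighborFinset] at hx
      exact hclaim x hx hza
  have hScard : k + 1 ≤ (insert u (insert v (((G.neighborFinset u).image p).erase a))).card := by
    rw [Finset.card_insert_of_notMem (by
        simp only [Finset.mem_insert, not_or]
        exact ⟨huv, fun hc => huT (Finset.mem_of_mem_erase hc)⟩),
      Finset.card_insert_of_notMem (fun hc => hvT (Finset.mem_of_mem_erase hc))]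
    have h1 := Finset.pred_card_le_card_erase (s := (G.neighborFinset u).image p) (a := a)
    omega
  have := Finset.card_le_card hSsub
  rw [hreg a] at this
  omega

lemma closed_nb (u v : Fin n) (p : Fin n → Fin n)
    (hp : ∀ w, w ≠ u → w ≠ v → p (p w) = w ∧ G.Adj w (p w) ∧ p w ≠ u ∧ p w ≠ v)
    (hne : ¬ G.Adj u v)
    (hkey : ∀ w, w ≠ u → w ≠ v → (G.Adj u w ↔ ¬ G.Adj v (p w)))
    (hXY : ∀ a, G.Adj u a → G.Adj v a → False) :
    ∀ x, G.Adj u x → G.Adj u (p x) := by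
  intro x hux
  have hxu : x ≠ u := hux.ne'
  have hxv : x ≠ v := fun hc => hne (hc ▸ hux)
  obtain ⟨hppx, hxpx, hpxu, hpxv⟩ := hp x hxu hxv
  by_contra h
  have h2 := hkey (p x) hpxu hpxv
  rw [hppx] at h2
  exact hXY x hux (not_not.mp (fun hc => h (h2.mpr hc)))

lemma nbhd (hnop : ¬ ∃ N : SimpleGraph (Fin n), IsPM N ∧ N ≤ G)
    (u v : Fin n) (huv : u ≠ v) (p : Fin n → Fin n)
    (hp : ∀ w, w ≠ u → w ≠ v → p (p w) = w ∧ G.Adj w (p w) ∧ p w ≠ u ∧ p w ≠ v)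
    (k : ℕ) (hn : n = 2 * k + 2) (hreg : ∀ w, (G.neighborFinset w).card = k)
    (hne : ¬ G.Adj u v)
    (hkey : ∀ w, w ≠ u → w ≠ v → (G.Adj u w ↔ ¬ G.Adj v (p w)))
    (hXY : ∀ a, G.Adj u a → G.Adj v a → False)
    (hpXX : ∀ x, G.Adj u x → G.Adj u (p x)) :
    ∀ x, G.Adj u x → ∀ w, w ≠ x → (G.Adj x w ↔ (w = u ∨ G.Adj u w)) := by
  intro x hux w hwx
  have hxu : x ≠ u := hux.ne'
  have hxv : x ≠ v := fun hc => hne (hc ▸ hux)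
  obtain ⟨hppx, hxpx, hpxu, hpxv⟩ := hp x hxu hxv
  by_cases hwv : w = v
  · subst hwv
    constructor
    · intro h; exact (hXY x hux h.symm).elim
    · rintro (h | h)
      · exact absurd h (Ne.symm huv)
      · exact absurd h hne
  · have hx0 : G.Adj u (p x) := hpXX x hux
    have h := swap_key G hnop u v huv p hp k hn hreg hne (p x) hx0 w
      (by rw [hppx]; exact hwx) hwv
    rw [hppx] at h
    by_cases hwu : w = u
    · rw [if_pos hwu] at h
      have hx1 : G.Adj x w := h.mpr (fun hc => hXY (p x) hx0 hc)
      rw [hwu] at hx1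
      simp [hx1, hwu]
    by_cases hwpx : w = p x
    · subst hwpx
      rw [if_neg hwu, if_pos rfl] at h
      simp [hxpx, hx0]
    · rw [if_neg hwu, if_neg hwpx] at h
      rw [h, ← hkey w hwu hwv]
      exact ⟨Or.inr, fun hh => hh.elim (fun hc => absurd hc hwu) id⟩

lemma forward (hnop : ¬ ∃ N : SimpleGraph (Fin n), IsPM N ∧ N ≤ G)
    (k : ℕ) (hn : n = 2 * k + 2) (hreg : ∀ w, (G.neighborFinset w).card = k) :
    Even k ∧ ∃ A : Finset (Fin n), A.card = k + 1 ∧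
      ∀ a b : Fin n, a ≠ b → (G.Adj a b ↔ (a ∈ A ↔ b ∈ A)) := by
  obtain ⟨D, p, hDcard, hD⟩ := exists_near G k hn hreg k le_rfl
  have hcompl : (Finset.univ \ D).card = 2 := by
    rw [Finset.card_sdiff_of_subset (Finset.subset_univ D), Finset.card_univ, Fintype.card_fin]
    omega
  obtain ⟨u, v, huv, huvset⟩ := Finset.card_eq_two.mp hcompl
  have hmemD : ∀ w, w ∈ D ↔ w ≠ u ∧ w ≠ v := by
    intro w
    have h := Finset.ext_iff.mp huvset w
    simp only [Finset.mem_sdiff, Finset.mem_univ, true_and, Finset.mem_insert,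
      Finset.mem_singleton] at h
    constructor
    · intro hw
      constructor <;> rintro rfl <;> simp [hw] at h
    · intro hw
      by_contra hc
      rcases h.mp hc with rfl | rfl
      · exact hw.1 rfl
      · exact hw.2 rfl
  have huD : u ∉ D := by rw [hmemD]; simp
  have hvD : v ∉ D := by rw [hmemD]; simp
  have hp : ∀ w, w ≠ u → w ≠ v → p (p w) = w ∧ G.Adj w (p w) ∧ p w ≠ u ∧ p w ≠ v := by
    intro w h1 h2
    obtain ⟨hpD, hpp, hadj⟩ := hD w ((hmemD w).mpr ⟨h1, h2⟩)
    exact ⟨hpp, hadj, fun hc => huD (hc ▸ hpD), fun hc => hvD (hc ▸ hpD)⟩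
  have hp' : ∀ w, w ≠ v → w ≠ u → p (p w) = w ∧ G.Adj w (p w) ∧ p w ≠ v ∧ p w ≠ u := by
    intro w h1 h2
    obtain ⟨a, b, c, d⟩ := hp w h2 h1
    exact ⟨a, b, d, c⟩
  obtain ⟨hne, hkey⟩ := key G hnop u v huv p hp k hn hreg
  obtain ⟨hne', hkey'⟩ := key G hnop v u (Ne.symm huv) p hp' k hn hreg
  have hXY := no_common G hnop u v huv p hp k hn hreg hne hkey
  have hXY' := no_common G hnop v u (Ne.symm huv) p hp' k hn hreg hne' hkey'
  have hpXX := closed_nb G u v p hp hne hkey hXY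
  have hpYY := closed_nb G v u p hp' hne' hkey' hXY'
  have hNx := nbhd G hnop u v huv p hp k hn hreg hne hkey hXY hpXX
  have hNy := nbhd G hnop v u (Ne.symm huv) p hp' k hn hreg hne' hkey' hXY' hpYY
  have hEk : Even k := by
    rw [← hreg u]
    apply even_card_invol p
    intro x hx
    rw [SimpleGraph.mem_neighborFinset] at hx
    obtain ⟨h1, h2, _, _⟩ := hp x hx.ne' (fun hc => hne (hc ▸ hx))
    exact ⟨by rw [SimpleGraph.mem_neighborFinset]; exact hpXX x hx, h1, h2.ne'⟩
  have hXYdisj : Disjoint (G.neighborFinset u) (G.neighborFinset v) := by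
    rw [Finset.disjoint_left]
    intro a ha hb
    rw [SimpleGraph.mem_neighborFinset] at ha hb
    exact hXY a ha hb
  have hvnU : v ∉ G.neighborFinset u ∪ G.neighborFinset v := by
    simp only [Finset.mem_union, SimpleGraph.mem_neighborFinset]
    exact fun hc => hc.elim hne (G.irrefl)
  have hunU : u ∉ insert v (G.neighborFinset u ∪ G.neighborFinset v) := by
    simp only [Finset.mem_insert, Finset.mem_union, SimpleGraph.mem_neighborFinset]
    push_neg
    exact ⟨huv, G.irrefl, fun hc => hne hc.symm⟩
  have hSuniv : insert u (insert v (G.neighborFinset u ∪ G.neighborFinset v))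
      = Finset.univ := by
    apply Finset.eq_univ_of_card
    rw [Finset.card_insert_of_notMem hunU, Finset.card_insert_of_notMem hvnU,
      Finset.card_union_of_disjoint hXYdisj, hreg, hreg, Fintype.card_fin]
    omega
  have hAcard : (insert u (G.neighborFinset u)).card = k + 1 := by
    rw [Finset.card_insert_of_notMem (by simp), hreg]
  have hmemA : ∀ w, w ∈ insert u (G.neighborFinset u) ↔ (w = u ∨ G.Adj u w) := by
    intro w; simp
  have hnotA : ∀ w, w ∉ insert u (G.neighborFinset u) ↔ (w = v ∨ G.Adj v w) := by
    intro w
    constructor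
    · intro hw
      rw [hmemA] at hw
      push_neg at hw
      have hcov : w = u ∨ w = v ∨ G.Adj u w ∨ G.Adj v w := by
        have hwu : w ∈ Finset.univ := Finset.mem_univ w
        rw [← hSuniv] at hwu
        simpa only [Finset.mem_insert, Finset.mem_union,
          SimpleGraph.mem_neighborFinset, or_assoc] using hwu
      tauto
    · rintro (rfl | hvw) hwA <;> rw [hmemA] at hwA
      · rcases hwA with h | h
        · exact huv h.symm
        · exact hne h
      · rcases hwA with rfl | h
        · exact hne hvw.symm
        · exact hXY w h hvw
  refine ⟨hEk, insert u (G.neighborFinset u), hAcard, ?_⟩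
  intro a b hab
  by_cases haA : a ∈ insert u (G.neighborFinset u)
  · have haA' := haA
    rw [hmemA] at haA
    have hbiff : G.Adj a b ↔ b ∈ insert u (G.neighborFinset u) := by
      rw [hmemA]
      rcases haA with rfl | h
      · exact ⟨Or.inr, fun hh => hh.elim (fun hc => absurd hc (Ne.symm hab)) id⟩
      · exact hNx a h b (Ne.symm hab)
    rw [hbiff]
    exact ⟨fun h => ⟨fun _ => h, fun _ => haA'⟩, fun h => h.mp haA'⟩
  · have hbv := (hnotA a).mp haA
    have hbiff : G.Adj a b ↔ b ∉ insert u (G.neighborFinset u) := by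
      rw [hnotA]
      rcases hbv with rfl | h
      · exact ⟨Or.inr, fun hh => hh.elim (fun hc => absurd hc (Ne.symm hab)) id⟩
      · exact hNy a h b (Ne.symm hab)
    rw [hbiff]
    exact ⟨fun h => ⟨fun ha => absurd ha haA, fun hb => absurd hb h⟩,
      fun h => fun hbA => haA (h.mpr hbA)⟩

end Aux2


/-- Given `n/2` pairwise edge-disjoint perfect matchings of `K_n` with
feasibility graph `G`, the graph `G` contains no perfect matching iff `n/2` is
odd and the complement of `G` is the complete bipartite graph `K_{n/2,n/2}`,
i.e. there is a set `A` of exactly `n/2` vertices such that the edges used by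
the matchings are exactly the pairs `{a, b}` with `a ∈ A` and `b ∉ A`. -/
theorem matching_stuck_characterization (n : ℕ) (hn : 0 < n) (heven : Even n)
    (M : Fin (n / 2) → SimpleGraph (Fin n))
    (hM : ∀ i, IsPM (M i))
    (hdisj : ∀ i j : Fin (n / 2), i ≠ j → Disjoint (M i).edgeSet (M j).edgeSet)
    (G : SimpleGraph (Fin n))
    (hG : ∀ u v : Fin n, G.Adj u v ↔ u ≠ v ∧ ∀ i, ¬ (M i).Adj u v) :
    (¬ ∃ N : SimpleGraph (Fin n), IsPM N ∧ N ≤ G) ↔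
      (Odd (n / 2) ∧ ∃ A : Finset (Fin n), A.card = n / 2 ∧
        ∀ u v : Fin n,
          (∃ i, (M i).Adj u v) ↔ ((u ∈ A ∧ v ∉ A) ∨ (v ∈ A ∧ u ∉ A))) := by
  classical
  obtain ⟨k, hn2, hhalf⟩ : ∃ k, n = 2 * k + 2 ∧ n / 2 = k + 1 := by
    obtain ⟨t, ht⟩ := heven
    exact ⟨t - 1, by omega, by omega⟩
  have hreg : ∀ w, (G.neighborFinset w).card = k := by
    intro w
    set f : Fin (n / 2) → Fin n := fun i => (hM i w).choose with hf
    have hpart : ∀ i, (M i).Adj w (f i) := fun i => (hM i w).choose_spec.1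
    have huniq : ∀ i z, (M i).Adj w z → z = f i := fun i z hz => ((hM i w).choose_spec.2 z hz)
    have hinj : Function.Injective f := by
      intro i j hij
      by_contra hij'
      have h1 : s(w, f i) ∈ (M i).edgeSet := (M i).mem_edgeSet.mpr (hpart i)
      have h2 : s(w, f i) ∈ (M j).edgeSet := (M j).mem_edgeSet.mpr (hij ▸ hpart j)
      exact Set.disjoint_left.mp (hdisj i j hij') h1 h2
    have hset : G.neighborFinset w
        = Finset.univ \ insert w (Finset.image f Finset.univ) := by
      ext z
      rw [SimpleGraph.mem_neighborFinset, hG]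
      simp only [Finset.mem_sdiff, Finset.mem_univ, true_and, Finset.mem_insert,
        Finset.mem_image, not_or, not_exists]
      constructor
      · rintro ⟨hwz, hnoi⟩
        refine ⟨Ne.symm hwz, fun i => ?_⟩
        intro hc
        exact hnoi i (hc ▸ hpart i)
      · rintro ⟨hzw, hnoi⟩
        refine ⟨Ne.symm hzw, fun i hc => hnoi i ?_⟩
        exact (huniq i z hc).symm
    rw [hset, Finset.card_sdiff_of_subset (Finset.subset_univ _), Finset.card_univ, Fintype.card_fin,
      Finset.card_insert_of_notMem (by
        simp only [Finset.mem_image, not_exists]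
        exact fun i hc => (hpart i).ne' hc.2),
      Finset.card_image_of_injective _ hinj, Finset.card_univ, Fintype.card_fin]
    omega
  constructor
  · intro hnop
    obtain ⟨hEk, A, hAcard, hchar⟩ := forward G hnop k hn2 hreg
    refine ⟨by rw [hhalf]; exact hEk.add_one, A, by omega, ?_⟩
    intro a b
    by_cases hab : a = b
    · subst hab
      simp only [SimpleGraph.irrefl, exists_false, false_iff]
      tauto
    · constructor
      · rintro ⟨i, hi⟩
        have hnadj : ¬ G.Adj a b := fun hc => ((hG a b).mp hc).2 i hi
        have h2 : ¬ (a ∈ A ↔ b ∈ A) := fun hc => hnadj ((hchar a b hab).mpr hc)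
        tauto
      · intro hrhs
        have h2 : ¬ (a ∈ A ↔ b ∈ A) := by tauto
        have h3 : ¬ G.Adj a b := fun hc => h2 ((hchar a b hab).mp hc)
        rw [hG] at h3
        push_neg at h3
        exact h3 hab
  · rintro ⟨hodd, A, hAcard, hchar⟩ ⟨N, hNpm, hNle⟩
    set g : Fin n → Fin n := fun z => (hNpm z).choose with hgdef
    have hg : ∀ z, N.Adj z (g z) := fun z => (hNpm z).choose_spec.1
    have hgu : ∀ z y, N.Adj z y → y = g z := fun z y hy => (hNpm z).choose_spec.2 y hy
    have hginv : ∀ z, g (g z) = z := fun z => ((hgu (g z) z (hg z).symm)).symm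
    have hgA : ∀ a ∈ A, g a ∈ A := by
      intro a ha
      have hadj : G.Adj a (g a) := hNle (hg a)
      have hnoM : ∀ i, ¬ (M i).Adj a (g a) := ((hG a (g a)).mp hadj).2
      have := hchar a (g a)
      by_contra hc
      have : ∃ i, (M i).Adj a (g a) := (hchar a (g a)).mpr (Or.inl ⟨ha, hc⟩)
      obtain ⟨i, hi⟩ := this
      exact hnoM i hi
    have hev : Even A.card :=
      even_card_invol g A (fun a ha => ⟨hgA a ha, hginv a, (hg a).ne'⟩)
    rw [hAcard] at hev
    exact Nat.not_even_iff_odd.mpr hodd hev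
end

section
/- Let n be a positive integer divisible by 4 and let M_1, …, M_r be pairwise edge-disjoint perfect matchings of the complete graph K_n with r ≤ n/2. Then there exists a perfect matching of K_n that is edge-disjoint from every M_i. (Consequently, for n divisible by four, the greedy algorithm that repeatedly deletes perfect matchings from K_n always completes at least n/2 + 1 rounds.) -/
open Finset

namespace GreedyPM

variable {n : ℕ}

/-- involution-style matching in a graph `G` -/
def IsM (G : SimpleGraph (Fin n)) (f : Fin n → Fin n) : Prop :=
  (∀ v, f (f v) = v) ∧ ∀ v, f v ≠ v → G.Adj v (f v)

def msupp (f : Fin n → Fin n) : Finset (Fin n) :=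
  univ.filter fun v => f v ≠ v

lemma mem_msupp {f : Fin n → Fin n} {v : Fin n} : v ∈ msupp f ↔ f v ≠ v := by
  simp [msupp]

lemma msupp_closed {G : SimpleGraph (Fin n)} {f : Fin n → Fin n} (hf : IsM G f)
    {v : Fin n} (hv : v ∈ msupp f) : f v ∈ msupp f := by
  rw [mem_msupp] at *
  rw [hf.1 v]
  exact fun h => hv h.symm

def nbr (G : SimpleGraph (Fin n)) [DecidableRel G.Adj] (v : Fin n) : Finset (Fin n) :=
  univ.filter fun w => G.Adj v w

lemma mem_nbr {G : SimpleGraph (Fin n)} [DecidableRel G.Adj] {v w : Fin n} :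
    w ∈ nbr G v ↔ G.Adj v w := by simp [nbr]

lemma even_card_of_invol (f : Fin n → Fin n) (s : Finset (Fin n))
    (hmem : ∀ a ∈ s, f a ∈ s) (hinv : ∀ a ∈ s, f (f a) = a)
    (hne : ∀ a ∈ s, f a ≠ a) : Even s.card := by
  induction s using Finset.strongInduction with
  | _ s ih =>
    rcases s.eq_empty_or_nonempty with rfl | ⟨a, ha⟩
    · simp
    · have hfa : f a ∈ s := hmem a ha
      have hfa' : f a ∈ s.erase a := Finset.mem_erase.mpr ⟨hne a ha, hfa⟩
      set t := (s.erase a).erase (f a) with ht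
      have hsub : t ⊂ s := by
        refine Finset.ssubset_of_subset_of_ssubset ?_ (Finset.erase_ssubset ha)
        exact Finset.erase_subset _ _
      have hts : ∀ b ∈ t, b ∈ s ∧ b ≠ a ∧ b ≠ f a := by
        intro b hb
        simp only [ht, Finset.mem_erase] at hb
        exact ⟨hb.2.2, hb.2.1, hb.1⟩
      have heven : Even t.card := by
        refine ih t hsub ?_ ?_ ?_
        · intro b hb
          obtain ⟨hbs, hba, hbfa⟩ := hts b hb
          simp only [ht, Finset.mem_erase]
          refine ⟨?_, ?_, hmem b hbs⟩
          · intro h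
            exact hba (by rw [← hinv b hbs, h, hinv a ha])
          · intro h
            exact hbfa (by rw [← hinv b hbs, h])
        · intro b hb; exact hinv b (hts b hb).1
        · intro b hb; exact hne b (hts b hb).1
      have hc : t.card = s.card - 2 := by
        rw [ht, Finset.card_erase_of_mem hfa', Finset.card_erase_of_mem ha]; omega
      have h2 : 2 ≤ s.card := by
        have := Finset.card_le_card (Finset.insert_subset hfa (Finset.singleton_subset_iff.mpr ha))
        simpa [Finset.card_insert_of_notMem, (hne a ha)] using
          Finset.card_le_card (show {f a, a} ⊆ s by
            intro x hx; simp at hx; rcases hx with rfl | rfl <;> assumption)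
      obtain ⟨k, hk⟩ := heven
      exact ⟨k + 1, by omega⟩


section Ops

variable {G : SimpleGraph (Fin n)} {f : Fin n → Fin n}

/-- add the edge `a-b` between two unmatched vertices -/
def addE (f : Fin n → Fin n) (a b : Fin n) : Fin n → Fin n :=
  fun z => if z = a then b else if z = b then a else f z

lemma addE_isM {a b : Fin n} (hf : IsM G f) (ha : f a = a) (hb : f b = b)
    (hab : a ≠ b) (hadj : G.Adj a b) : IsM G (addE f a b) := by
  constructor
  · intro v
    by_cases h1 : v = a
    · subst h1; simp [addE, hab, hab.symm]
    · by_cases h2 : v = b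
      · subst h2; simp [addE, hab, hab.symm]
      · have h3 : f v ≠ a := fun h => h1 (by rw [← hf.1 v, h, ha])
        have h4 : f v ≠ b := fun h => h2 (by rw [← hf.1 v, h, hb])
        simp [addE, h1, h2, h3, h4, hf.1 v]
  · intro v hv
    by_cases h1 : v = a
    · subst h1; simpa [addE, hab] using hadj
    · by_cases h2 : v = b
      · subst h2; simpa [addE, hab, h1] using hadj.symm
      · simp only [addE, if_neg h1, if_neg h2] at hv ⊢
        exact hf.2 v hv

lemma addE_msupp {a b : Fin n} (ha : f a = a) (hb : f b = b) (hab : a ≠ b) :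
    msupp (addE f a b) = insert a (insert b (msupp f)) := by
  ext z
  simp only [mem_msupp, Finset.mem_insert]
  by_cases h1 : z = a
  · subst h1; simp [addE, hab.symm]
  · by_cases h2 : z = b
    · subst h2; simp [addE, hab, hab.symm, h1]
    · simp [addE, h1, h2]

/-- rematch: `v` unmatched, `w` matched; match `v` with `w`, freeing `f w` -/
def reroute (f : Fin n → Fin n) (v w : Fin n) : Fin n → Fin n :=
  fun z => if z = v then w else if z = w then v else if z = f w then f w else f z

variable {v w : Fin n}

lemma reroute_facts (hf : IsM G f) (hv : f v = v) (hw : f w ≠ w) :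
    v ≠ w ∧ v ≠ f w ∧ w ≠ f w ∧ reroute f v w v = w ∧ reroute f v w w = v ∧
      reroute f v w (f w) = f w ∧ ∀ z, z ≠ v → z ≠ w → z ≠ f w → reroute f v w z = f z := by
  have h1 : v ≠ w := fun h => hw (h ▸ hv)
  have h2 : v ≠ f w := by
    intro h
    have hvw : v = w := by rw [← hv, h, hf.1]
    exact hw (by rw [← h, hvw])
  have h3 : w ≠ f w := fun h => hw h.symm
  refine ⟨h1, h2, h3, ?_, ?_, ?_, ?_⟩
  · simp [reroute]
  · simp [reroute, h1.symm]
  · simp [reroute, h2.symm, h3.symm]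
  · intro z hzv hzw hzfw
    simp [reroute, hzv, hzw, hzfw]

lemma reroute_isM (hf : IsM G f) (hv : f v = v) (hw : f w ≠ w) (hadj : G.Adj v w) :
    IsM G (reroute f v w) := by
  obtain ⟨h1, h2, h3, e1, e2, e3, e4⟩ := reroute_facts hf hv hw
  constructor
  · intro z
    by_cases hzv : z = v
    · subst hzv; rw [e1, e2]
    · by_cases hzw : z = w
      · subst hzw; rw [e2, e1]
      · by_cases hzfw : z = f w
        · subst hzfw; rw [e3, e3]
        · rw [e4 z hzv hzw hzfw]
          have g1 : f z ≠ v := fun h => hzv (by rw [← hf.1 z, h, hv])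
          have g2 : f z ≠ w := fun h => hzfw (by rw [← hf.1 z, h])
          have g3 : f z ≠ f w := fun h => hzw (by rw [← hf.1 z, h, hf.1 w])
          rw [e4 _ g1 g2 g3, hf.1 z]
  · intro z hz
    by_cases hzv : z = v
    · subst hzv; rw [e1]; exact hadj
    · by_cases hzw : z = w
      · subst hzw; rw [e2]; exact hadj.symm
      · by_cases hzfw : z = f w
        · subst hzfw; rw [e3] at hz; exact absurd rfl hz
        · rw [e4 z hzv hzw hzfw] at hz ⊢
          exact hf.2 z hz

lemma reroute_msupp (hf : IsM G f) (hv : f v = v) (hw : f w ≠ w) :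
    msupp (reroute f v w) = insert v ((msupp f).erase (f w)) := by
  obtain ⟨h1, h2, h3, e1, e2, e3, e4⟩ := reroute_facts hf hv hw
  ext z
  simp only [mem_msupp, Finset.mem_insert, Finset.mem_erase]
  by_cases hzv : z = v
  · subst hzv; rw [e1]; simp [h1, h1.symm]
  · by_cases hzw : z = w
    · subst hzw; rw [e2]
      simp [h1, h1.symm, h3, h3.symm, hw, hzv]
    · by_cases hzfw : z = f w
      · subst hzfw; rw [e3]; simp [hzv]
      · rw [e4 z hzv hzw hzfw]; simp [hzv, hzfw]

end Ops


section Tight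

variable {G : SimpleGraph (Fin n)} [DecidableRel G.Adj] {f : Fin n → Fin n}

lemma no_adj_fixed (hf : IsM G f)
    (hmax : ∀ g, IsM G g → (msupp g).card ≤ (msupp f).card)
    {a b : Fin n} (ha : f a = a) (hb : f b = b) (hab : a ≠ b) : ¬ G.Adj a b := by
  intro hadj
  have h2 := addE_isM hf ha hb hab hadj
  have h3 := addE_msupp (f := f) ha hb hab
  have h4 := hmax _ h2
  rw [h3] at h4
  have hbm : b ∉ msupp f := by rw [mem_msupp]; exact fun h => h hb
  have ham : a ∉ insert b (msupp f) := by
    simp only [Finset.mem_insert, mem_msupp]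
    push_neg
    exact ⟨hab, ha⟩
  rw [Finset.card_insert_of_notMem ham, Finset.card_insert_of_notMem hbm] at h4
  omega

lemma tight {d : ℕ} (hn4 : 4 ∣ n)
    (hdeg : ∀ v, (nbr G v).card = d) (hd : n / 2 - 1 ≤ d)
    (hf : IsM G f)
    (hmax : ∀ g, IsM G g → (msupp g).card ≤ (msupp f).card)
    {u v : Fin n} (hu : f u = u) (hv : f v = v) (huv : u ≠ v) :
    ¬ G.Adj u v ∧ (∀ z, G.Adj u z → ¬ G.Adj v (f z)) ∧
    msupp f = univ \ {u, v} ∧ d = n / 2 - 1 ∧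
    (∀ z ∈ msupp f, (G.Adj u (f z) ↔ ¬ G.Adj v z)) := by
  have hum : u ∉ msupp f := by rw [mem_msupp]; exact fun h => h hu
  have hvm : v ∉ msupp f := by rw [mem_msupp]; exact fun h => h hv
  have hna : ¬ G.Adj u v := no_adj_fixed hf hmax hu hv huv
  -- neighbors of a fixed point are matched
  have T1 : ∀ a z, f a = a → G.Adj a z → z ∈ msupp f := by
    intro a z haf hz
    rw [mem_msupp]
    intro hfz
    exact no_adj_fixed hf hmax haf hfz hz.ne hz
  -- no double augmentation
  have T2 : ∀ z, G.Adj u z → ¬ G.Adj v (f z) := by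
    intro z hz hvz
    have hzs : f z ≠ z := mem_msupp.mp (T1 u z hu hz)
    have hzu : z ≠ u := hz.ne'
    have hzv : z ≠ v := by
      intro h; subst h
      rw [hv] at hvz
      exact G.irrefl hvz
    have hfzu : f z ≠ u := fun h => hzu (by rw [← hf.1 z, h, hu])
    have hfzv : f z ≠ v := hvz.ne'
    obtain ⟨q1, q2, q3, e1, e2, e3, e4⟩ := reroute_facts hf hu hzs
    have hg1 : IsM G (reroute f u z) := reroute_isM hf hu hzs hz
    have hg1v : reroute f u z v = v := by
      rw [e4 v huv.symm hzv.symm hfzv.symm, hv]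
    have hg1fz : reroute f u z (f z) = f z := e3
    have hg2 := addE_isM hg1 hg1v hg1fz hfzv.symm hvz
    have hc2 := addE_msupp (f := reroute f u z) hg1v hg1fz hfzv.symm
    rw [reroute_msupp hf hu hzs] at hc2
    have h4 := hmax _ hg2
    rw [hc2] at h4
    have m1 : u ∉ (msupp f).erase (f z) := fun h => hum (Finset.mem_of_mem_erase h)
    have m2 : f z ∉ insert u ((msupp f).erase (f z)) := by
      simp only [Finset.mem_insert]
      push_neg
      exact ⟨hfzu, Finset.notMem_erase _ _⟩
    have m3 : v ∉ insert (f z) (insert u ((msupp f).erase (f z))) := by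
      simp only [Finset.mem_insert]
      push_neg
      refine ⟨hfzv.symm, huv.symm, fun h => hvm (Finset.mem_of_mem_erase h)⟩
    have hfzm : f z ∈ msupp f := msupp_closed hf (mem_msupp.mpr hzs)
    rw [Finset.card_insert_of_notMem m3, Finset.card_insert_of_notMem m2,
      Finset.card_insert_of_notMem m1, Finset.card_erase_of_mem hfzm] at h4
    have : 1 ≤ (msupp f).card := Finset.card_pos.mpr ⟨f z, hfzm⟩
    omega
  -- counting
  have hinj : Function.Injective f := by
    intro a b hab
    rw [← hf.1 a, hab, hf.1 b]
  have hnu : nbr G u ⊆ msupp f := fun z hz => T1 u z hu (mem_nbr.mp hz)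
  have hnv : nbr G v ⊆ msupp f := fun z hz => T1 v z hv (mem_nbr.mp hz)
  have himg : (nbr G u).image f ⊆ msupp f := by
    intro z hz
    obtain ⟨x, hx, rfl⟩ := Finset.mem_image.mp hz
    exact msupp_closed hf (hnu hx)
  have hdisj2 : Disjoint ((nbr G u).image f) (nbr G v) := by
    rw [Finset.disjoint_left]
    intro z hz hz2
    obtain ⟨x, hx, rfl⟩ := Finset.mem_image.mp hz
    exact T2 x (mem_nbr.mp hx) (mem_nbr.mp hz2)
  have hcard1 : ((nbr G u).image f).card = d := by
    rw [Finset.card_image_of_injective _ hinj, hdeg]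
  have hsub2 : (nbr G u).image f ∪ nbr G v ⊆ msupp f := Finset.union_subset himg hnv
  have hcardu : ((nbr G u).image f ∪ nbr G v).card = d + d := by
    rw [Finset.card_union_of_disjoint hdisj2, hcard1, hdeg]
  have hms : msupp f ⊆ univ \ {u, v} := by
    intro z hz
    simp only [Finset.mem_sdiff, Finset.mem_univ, Finset.mem_insert, Finset.mem_singleton,
      true_and]
    push_neg
    constructor
    · rintro rfl; exact hum hz
    · rintro rfl; exact hvm hz
  have hcuv : (univ \ {u, v} : Finset (Fin n)).card = n - 2 := by
    rw [Finset.card_sdiff_of_subset (by simp), Finset.card_univ]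
    simp [Finset.card_insert_of_notMem, huv]
  have hle1 : d + d ≤ (msupp f).card := by
    rw [← hcardu]; exact Finset.card_le_card hsub2
  have hle2 : (msupp f).card ≤ n - 2 := by
    rw [← hcuv]; exact Finset.card_le_card hms
  have hn2 : 2 ∣ n := dvd_trans (by norm_num) hn4
  have hdd : d = n / 2 - 1 := by omega
  have hmse : msupp f = univ \ {u, v} :=
    Finset.eq_of_subset_of_card_le hms (by omega)
  have hune : (nbr G u).image f ∪ nbr G v = msupp f :=
    Finset.eq_of_subset_of_card_le hsub2 (by omega)
  refine ⟨hna, T2, hmse, hdd, ?_⟩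
  intro z hz
  constructor
  · intro hadj hvz
    have hzim : z ∈ (nbr G u).image f := by
      refine Finset.mem_image.mpr ⟨f z, mem_nbr.mpr hadj, hf.1 z⟩
    exact Finset.disjoint_left.mp hdisj2 hzim (mem_nbr.mpr hvz)
  · intro hvz
    have : z ∈ (nbr G u).image f ∪ nbr G v := by rw [hune]; exact hz
    rcases Finset.mem_union.mp this with h | h
    · obtain ⟨x, hx, rfl⟩ := Finset.mem_image.mp h
      rw [hf.1 x]
      exact mem_nbr.mp hx
    · exact absurd (mem_nbr.mp h) hvz

end Tight


section Key

variable {G : SimpleGraph (Fin n)} [DecidableRel G.Adj] {f : Fin n → Fin n}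

lemma key {d : ℕ} (hn4 : 4 ∣ n)
    (hdeg : ∀ v, (nbr G v).card = d) (hd : n / 2 - 1 ≤ d)
    (hf : IsM G f)
    (hmax : ∀ g, IsM G g → (msupp g).card ≤ (msupp f).card)
    {u v w : Fin n} (hu : f u = u) (hv : f v = v) (huv : u ≠ v)
    (hw1 : G.Adj u w) (hw2 : G.Adj v w) :
    ∀ z, G.Adj v z ↔ G.Adj (f w) z := by
  obtain ⟨hna, T2, hmse, hdd, T4⟩ := tight hn4 hdeg hd hf hmax hu hv huv
  have hwm : w ∈ msupp f := by
    rw [hmse]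
    simp only [Finset.mem_sdiff, Finset.mem_univ, Finset.mem_insert, Finset.mem_singleton,
      true_and]
    push_neg
    exact ⟨hw1.ne', hw2.ne'⟩
  have hws : f w ≠ w := mem_msupp.mp hwm
  have hw'm : f w ∈ msupp f := msupp_closed hf hwm
  have hw'uv : f w ≠ u ∧ f w ≠ v := by
    rw [hmse] at hw'm
    simp only [Finset.mem_sdiff, Finset.mem_univ, Finset.mem_insert, Finset.mem_singleton,
      true_and] at hw'm
    push_neg at hw'm
    exact hw'm
  have hnvw' : ¬ G.Adj v (f w) := T2 w hw1
  -- build g matching v with w, freeing f w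
  obtain ⟨q1, q2, q3, e1, e2, e3, e4⟩ := reroute_facts hf hv hws
  set g := reroute f v w with hg
  have hgM : IsM G g := reroute_isM hf hv hws hw2
  have hgsupp : msupp g = insert v ((msupp f).erase (f w)) := reroute_msupp hf hv hws
  have hgcard : (msupp g).card = (msupp f).card := by
    rw [hgsupp, Finset.card_insert_of_notMem (by
      intro h
      exact (mem_msupp.mp (Finset.mem_of_mem_erase h)) hv),
      Finset.card_erase_of_mem hw'm]
    have : 1 ≤ (msupp f).card := Finset.card_pos.mpr ⟨w, hwm⟩
    omega
  have hmaxg : ∀ h, IsM G h → (msupp h).card ≤ (msupp g).card := by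
    intro h hh; rw [hgcard]; exact hmax h hh
  have hgu : g u = u := by
    rw [e4 u huv hw1.ne hw'uv.1.symm]; exact hu
  have hgw' : g (f w) = f w := e3
  obtain ⟨gna, gT2, gmse, _, gT4⟩ := tight hn4 hdeg hd hgM hmaxg hgu hgw' hw'uv.1.symm
  intro z
  by_cases hzu : z = u
  · subst hzu
    exact iff_of_false (fun h => hna h.symm) (fun h => gna h.symm)
  by_cases hzv : z = v
  · subst hzv
    exact iff_of_false G.irrefl (fun h => hnvw' h.symm)
  by_cases hzw' : z = f w
  · subst hzw'
    exact iff_of_false hnvw' G.irrefl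
  by_cases hzw : z = w
  · subst hzw
    exact iff_of_true hw2 (hf.2 z hws).symm
  -- main case
  have hzf : z ∈ msupp f := by
    rw [hmse]; simp [hzu, hzv]
  have hzg : z ∈ msupp g := by
    rw [gmse]; simp [hzu, hzw']
  have hgz : g z = f z := e4 z hzv hzw hzw'
  have h1 := T4 z hzf
  have h2 := gT4 z hzg
  rw [hgz] at h2
  rw [h1] at h2
  tauto

end Key


section Main

variable {G : SimpleGraph (Fin n)} [DecidableRel G.Adj]

lemma exists_perfect (hn : 0 < n) (hn4 : 4 ∣ n) {d : ℕ}
    (hdeg : ∀ v, (nbr G v).card = d) (hd : n / 2 - 1 ≤ d) :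
    ∃ f, IsM G f ∧ ∀ v, f v ≠ v := by
  classical
  have hid : IsM G (id : Fin n → Fin n) := ⟨fun v => rfl, fun v h => absurd rfl h⟩
  obtain ⟨f, hfmem, hmax0⟩ := Finset.exists_max_image
    (univ.filter (fun g : Fin n → Fin n => IsM G g)) (fun g => (msupp g).card)
    ⟨id, by simp [hid]⟩
  have hf : IsM G f := (Finset.mem_filter.mp hfmem).2
  have hmax : ∀ g, IsM G g → (msupp g).card ≤ (msupp f).card := by
    intro g hg
    exact hmax0 g (Finset.mem_filter.mpr ⟨Finset.mem_univ _, hg⟩)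
  refine ⟨f, hf, ?_⟩
  by_contra hall
  push_neg at hall
  obtain ⟨u, hu⟩ := hall
  have hmeven : Even (msupp f).card :=
    even_card_of_invol f (msupp f) (fun a ha => msupp_closed hf ha)
      (fun a _ => hf.1 a) (fun a ha => mem_msupp.mp ha)
  have hFeq : univ.filter (fun v => f v = v) = univ \ msupp f := by
    ext z
    simp only [Finset.mem_filter, Finset.mem_univ, true_and, Finset.mem_sdiff, mem_msupp]
    tauto
  have hFcard : (univ.filter (fun v => f v = v)).card = n - (msupp f).card := by
    rw [hFeq, Finset.card_sdiff_of_subset (Finset.subset_univ _), Finset.card_univ, Fintype.card_fin]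
  have huF : u ∈ univ.filter (fun v => f v = v) := by
    simp [hu]
  have h2F : 2 ≤ (univ.filter (fun v => f v = v)).card := by
    have h1 : 1 ≤ (univ.filter (fun v => f v = v)).card := Finset.card_pos.mpr ⟨u, huF⟩
    have hle : (msupp f).card ≤ n := by
      calc (msupp f).card ≤ (univ : Finset (Fin n)).card := Finset.card_le_card (Finset.subset_univ _)
      _ = n := by rw [Finset.card_univ, Fintype.card_fin]
    obtain ⟨c, hc⟩ := hmeven
    omega
  obtain ⟨v, hvF, hvu⟩ := Finset.exists_mem_ne (s := univ.filter (fun v => f v = v)) (by omega) u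
  have hv : f v = v := by
    simpa using (Finset.mem_filter.mp hvF).2
  have huv : u ≠ v := hvu.symm
  obtain ⟨hna, T2, hmse, hdd, T4⟩ := tight hn4 hdeg hd hf hmax hu hv huv
  have hcuv : (univ \ {u, v} : Finset (Fin n)).card = n - 2 := by
    rw [Finset.card_sdiff_of_subset (by simp), Finset.card_univ]
    simp [Finset.card_insert_of_notMem, huv]
  have hnusub : nbr G u ⊆ msupp f := by
    intro z hz
    rw [mem_nbr] at hz
    rw [hmse]
    simp only [Finset.mem_sdiff, Finset.mem_univ, Finset.mem_insert, Finset.mem_singleton,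
      true_and]
    push_neg
    refine ⟨hz.ne', ?_⟩
    rintro rfl
    exact hna hz
  have hn4' : 4 ≤ n := by omega
  by_cases hcom : ∃ w, G.Adj u w ∧ G.Adj v w
  · obtain ⟨w, hw1, hw2⟩ := hcom
    have C1 := key hn4 hdeg hd hf hmax hu hv huv hw1 hw2
    have C2 := key hn4 hdeg hd hf hmax hv hu huv.symm hw2 hw1
    have C3 : ∀ z, G.Adj u z ↔ G.Adj v z := fun z => (C2 z).trans (C1 z).symm
    have hnbne : (nbr G u).Nonempty := by
      have hcp : 0 < (nbr G u).card := by rw [hdeg]; omega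
      exact Finset.card_pos.mp hcp
    obtain ⟨y, hy⟩ := hnbne
    have hyu : G.Adj u y := mem_nbr.mp hy
    have hyv : G.Adj v y := (C3 y).mp hyu
    have hS : insert u (insert v ((msupp f) \ nbr G u)) ⊆ nbr G y := by
      intro z hz
      rw [mem_nbr]
      simp only [Finset.mem_insert, Finset.mem_sdiff] at hz
      rcases hz with rfl | rfl | ⟨hzm, hznu⟩
      · exact hyu.symm
      · exact hyv.symm
      · have hnvz : ¬ G.Adj v z := fun h => hznu (mem_nbr.mpr ((C3 z).mpr h))
        have hufz : G.Adj u (f z) := (T4 z hzm).mpr hnvz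
        have hvfz : G.Adj v (f z) := (C3 (f z)).mp hufz
        have Ck := key hn4 hdeg hd hf hmax hu hv huv hufz hvfz y
        rw [hf.1 z] at Ck
        exact (Ck.mp hyv).symm
    have hvnm : v ∉ (msupp f) \ nbr G u := by
      simp only [Finset.mem_sdiff, hmse]
      simp [huv]
    have hunm : u ∉ insert v ((msupp f) \ nbr G u) := by
      simp only [Finset.mem_insert, Finset.mem_sdiff, hmse]
      simp [huv]
    have hcS : (insert u (insert v ((msupp f) \ nbr G u))).card = ((n - 2) - d) + 2 := by
      rw [Finset.card_insert_of_notMem hunm, Finset.card_insert_of_notMem hvnm,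
        Finset.card_sdiff_of_subset hnusub, hmse, hcuv, hdeg]
    have hfin := Finset.card_le_card hS
    rw [hcS, hdeg] at hfin
    omega
  · push_neg at hcom
    have heven : Even d := by
      rw [← hdeg u]
      refine even_card_of_invol f (nbr G u) ?_ (fun a _ => hf.1 a)
        (fun a ha => mem_msupp.mp (hnusub ha))
      intro a ha
      rw [mem_nbr] at ha ⊢
      exact (T4 a (hnusub (mem_nbr.mpr ha))).mpr (hcom a ha)
    obtain ⟨c, hc⟩ := heven
    omega

end Main

end GreedyPM

/-- If `n` is a positive integer divisible by `4` and `M_1, …, M_r` are pairwise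
edge-disjoint perfect matchings of `K_n` with `r ≤ n/2`, then there is a perfect
matching of `K_n` edge-disjoint from every `M_i`. -/
theorem greedy_matching_div_four (n : ℕ) (hn : 0 < n) (h4 : 4 ∣ n)
    (r : ℕ) (hr : r ≤ n / 2)
    (M : Fin r → SimpleGraph (Fin n))
    (hM : ∀ i, IsPM (M i))
    (hdisj : ∀ i j : Fin r, i ≠ j → Disjoint (M i).edgeSet (M j).edgeSet) :
    ∃ N : SimpleGraph (Fin n), IsPM N ∧ ∀ i, Disjoint N.edgeSet (M i).edgeSet := by
  classical
  open Finset in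
  -- the feasibility graph
  set G : SimpleGraph (Fin n) :=
    { Adj := fun a b => a ≠ b ∧ ∀ i, ¬ (M i).Adj a b
      symm := by
        constructor
        intro a b hab
        exact ⟨hab.1.symm, fun i h => hab.2 i h.symm⟩
      loopless := ⟨fun a h => h.1 rfl⟩ } with hG
  have hGadj : ∀ a b, G.Adj a b ↔ (a ≠ b ∧ ∀ i, ¬ (M i).Adj a b) := fun a b => Iff.rfl
  -- regularity of the feasibility graph
  have hdeg : ∀ v, (GreedyPM.nbr G v).card = n - 1 - r := by
    intro v
    set p : Fin r → Fin n := fun i => (hM i v).choose with hp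
    have hpadj : ∀ i, (M i).Adj v (p i) := fun i => (hM i v).choose_spec.1
    have hpuniq : ∀ i w, (M i).Adj v w → w = p i := fun i w hw => (hM i v).choose_spec.2 w hw
    have hinj : Function.Injective p := by
      intro i j hij
      by_contra hne
      refine Set.disjoint_left.mp (hdisj i j hne) ((M i).mem_edgeSet.mpr (hpadj i)) ?_
      rw [SimpleGraph.mem_edgeSet, hij]
      exact hpadj j
    have hset : univ.filter (fun w => ¬ G.Adj v w) = insert v (Finset.image p univ) := by
      ext w
      simp only [Finset.mem_filter, Finset.mem_univ, true_and, Finset.mem_insert,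
        Finset.mem_image, hGadj]
      push_neg
      constructor
      · intro h
        by_cases hvw : w = v
        · left; exact hvw
        · obtain ⟨i, hi⟩ := h (Ne.symm hvw)
          right; exact ⟨i, (hpuniq i w hi).symm⟩
      · rintro (rfl | ⟨i, rfl⟩)
        · intro h; exact absurd rfl h
        · intro _; exact ⟨i, hpadj i⟩
    have hvni : v ∉ Finset.image p univ := by
      rw [Finset.mem_image]
      rintro ⟨i, _, hi⟩
      exact (M i).ne_of_adj (hpadj i) hi.symm
    have hcards : (univ.filter (fun w => ¬ G.Adj v w)).card = r + 1 := by
      rw [hset, Finset.card_insert_of_notMem hvni,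
        Finset.card_image_of_injective _ hinj, Finset.card_univ, Fintype.card_fin]
    have hsplit := Finset.card_filter_add_card_filter_not
      (s := univ) (p := fun w => G.Adj v w)
    rw [Finset.card_univ, Fintype.card_fin] at hsplit
    have : (GreedyPM.nbr G v).card + (r + 1) = n := by
      rw [← hcards]
      exact hsplit
    omega
  have hd : n / 2 - 1 ≤ n - 1 - r := by omega
  obtain ⟨f, hf, hall⟩ := GreedyPM.exists_perfect hn h4 hdeg hd
  refine ⟨{ Adj := fun a b => a ≠ b ∧ f a = b
            symm := by
              constructor
              rintro a b ⟨h1, rfl⟩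
              exact ⟨h1.symm, hf.1 a⟩
            loopless := ⟨fun a h => h.1 rfl⟩ }, ?_, ?_⟩
  · intro v
    refine ⟨f v, ⟨(hall v).symm, rfl⟩, ?_⟩
    rintro w ⟨h1, rfl⟩
    rfl
  · intro i
    rw [Set.disjoint_left]
    intro e he hei
    induction e with
    | h a b =>
      rw [SimpleGraph.mem_edgeSet] at he hei
      obtain ⟨h1, h2⟩ := he
      have hGab : G.Adj a b := h2 ▸ hf.2 a (fun h => h1 (h ▸ h2.symm ▸ rfl))
      exact ((hGadj a b).mp hGab).2 i hei
end

section
/- Let n ≥ 4 be an even integer and let M_1, …, M_{n/2−1} be pairwise edge-disjoint perfect matchings of the complete graph K_n. Then there exist two further perfect matchings M and M' of K_n such that M_1, …, M_{n/2−1}, M, M' are pairwise edge-disjoint. In other words, by selecting the matching in round n/2 carefully, every tournament can be continued to n/2 + 1 rounds. -/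
open Finset

section Dirac

variable {n : ℕ} {V : Type} [Fintype V] [DecidableEq V]

/-- Reversal of the interval `[1, c]` in `ZMod n`. -/
private def rev [NeZero n] (c : ℕ) (k : ZMod n) : ZMod n :=
  if 1 ≤ k.val ∧ k.val ≤ c then ((c + 1 - k.val : ℕ) : ZMod n) else k

private lemma rev_of_mem [NeZero n] {c : ℕ} (hc : c < n) {k : ZMod n}
    (h1 : 1 ≤ k.val) (h2 : k.val ≤ c) :
    rev c k = ((c + 1 - k.val : ℕ) : ZMod n) := by
  rw [rev, if_pos ⟨h1, h2⟩]

private lemma rev_val_of_mem [NeZero n] {c : ℕ} (hc : c < n) {k : ZMod n}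
    (h1 : 1 ≤ k.val) (h2 : k.val ≤ c) :
    (rev c k).val = c + 1 - k.val := by
  rw [rev_of_mem hc h1 h2]
  exact ZMod.val_cast_of_lt (by omega)

private lemma rev_of_not_mem [NeZero n] {c : ℕ} {k : ZMod n}
    (h : ¬ (1 ≤ k.val ∧ k.val ≤ c)) : rev c k = k := by
  rw [rev, if_neg h]

private lemma rev_involutive [NeZero n] {c : ℕ} (hc : c < n) :
    Function.Involutive (rev (n := n) c) := by
  intro k
  by_cases h : 1 ≤ k.val ∧ k.val ≤ c
  · have hv : (rev c k).val = c + 1 - k.val := rev_val_of_mem hc h.1 h.2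
    have h2 : 1 ≤ (rev c k).val ∧ (rev c k).val ≤ c := by omega
    have hvv : (rev c (rev c k)).val = c + 1 - (rev c k).val := rev_val_of_mem hc h2.1 h2.2
    rw [hv] at hvv
    have hkk : (rev c (rev c k)).val = k.val := by omega
    calc rev c (rev c k) = (((rev c (rev c k)).val : ℕ) : ZMod n) :=
          (ZMod.natCast_rightInverse _).symm
      _ = ((k.val : ℕ) : ZMod n) := by rw [hkk]
      _ = k := ZMod.natCast_rightInverse _
  · rw [rev_of_not_mem h, rev_of_not_mem h]

private lemma val_add_one_of_ne [NeZero n] (hn : 2 ≤ n) (i : ZMod n)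
    (h : i.val ≠ n - 1) : (i + 1).val = i.val + 1 := by
  haveI : Fact (1 < n) := ⟨by omega⟩
  rw [ZMod.val_add, ZMod.val_one]
  have := ZMod.val_lt i
  exact Nat.mod_eq_of_lt (by omega)

private lemma val_add_one_eq_zero [NeZero n] (hn : 2 ≤ n) (i : ZMod n)
    (h : i.val = n - 1) : (i + 1).val = 0 := by
  haveI : Fact (1 < n) := ⟨by omega⟩
  rw [ZMod.val_add, ZMod.val_one, h]
  have : n - 1 + 1 = n := by omega
  rw [this, Nat.mod_self]

/-- The set of "bad" positions of a cyclic ordering `f`. -/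
private def badSet [NeZero n] (H : SimpleGraph V) [DecidableRel H.Adj]
    (f : ZMod n → V) : Finset (ZMod n) :=
  univ.filter fun i => ¬ H.Adj (f i) (f (i + 1))

/-- Descent step at position 0: if `f` is bad at `0`, there is a better ordering. -/
private lemma descent_at_zero [NeZero n] (hn : 4 ≤ n) (H : SimpleGraph V) [DecidableRel H.Adj]
    (hcard : Fintype.card V = n) (hdeg : ∀ v, n ≤ 2 * H.degree v)
    (f : ZMod n → V) (hf : Function.Bijective f)
    (hbad : ¬ H.Adj (f 0) (f 1)) :
    ∃ g : ZMod n → V, Function.Bijective g ∧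
      (badSet H g).card < (badSet H f).card := by
  haveI : Fact (1 < n) := ⟨by omega⟩
  set a := f 0 with ha
  set b := f 1 with hb
  -- pigeonhole: find q with H.Adj a (f q) and H.Adj b (f (q+1))
  have hpigeon : ∃ q : ZMod n, H.Adj a (f q) ∧ H.Adj b (f (q + 1)) := by
    classical
    set A : Finset (ZMod n) := univ.filter (fun i => H.Adj a (f i)) with hA
    set T : Finset (ZMod n) := univ.filter (fun j => H.Adj b (f j)) with hT
    set S : Finset (ZMod n) := A.image (· + 1) with hS
    have hcardA : A.card = H.degree a := by
      rw [SimpleGraph.degree]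
      apply Finset.card_bij (fun i _ => f i)
      · intro i hi
        simp only [hA, mem_filter] at hi
        simp [SimpleGraph.mem_neighborFinset, hi.2]
      · intro i hi j hj hij
        exact hf.1 hij
      · intro w hw
        obtain ⟨i, rfl⟩ := hf.2 w
        refine ⟨i, ?_, rfl⟩
        simp only [hA, mem_filter, mem_univ, true_and]
        exact (SimpleGraph.mem_neighborFinset _ _ _).mp hw
    have hcardT : T.card = H.degree b := by
      rw [SimpleGraph.degree]
      apply Finset.card_bij (fun i _ => f i)
      · intro i hi
        simp only [hT, mem_filter] at hi
        simp [SimpleGraph.mem_neighborFinset, hi.2]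
      · intro i hi j hj hij
        exact hf.1 hij
      · intro w hw
        obtain ⟨i, rfl⟩ := hf.2 w
        refine ⟨i, ?_, rfl⟩
        simp only [hT, mem_filter, mem_univ, true_and]
        exact (SimpleGraph.mem_neighborFinset _ _ _).mp hw
    have hcardS : S.card = A.card := Finset.card_image_of_injective _ (add_left_injective 1)
    have h1S : (1 : ZMod n) ∉ S := by
      simp only [hS, mem_image]
      rintro ⟨i, hi, hi1⟩
      have hi0 : i = 0 := add_left_injective 1 (show i + 1 = 0 + 1 by rw [zero_add]; exact hi1)
      subst hi0
      simp only [hA, mem_filter] at hi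
      exact H.irrefl hi.2
    have h1T : (1 : ZMod n) ∉ T := by
      simp only [hT, mem_filter, mem_univ, true_and]
      exact fun h => H.irrefl h
    have hinter : (S ∩ T).Nonempty := by
      by_contra hc
      rw [Finset.not_nonempty_iff_eq_empty] at hc
      have hdisj : Disjoint S T := Finset.disjoint_iff_inter_eq_empty.mpr hc
      have hsub : S ∪ T ⊆ univ.erase 1 := by
        intro x hx
        rcases Finset.mem_union.mp hx with h | h
        · exact Finset.mem_erase.mpr ⟨fun he => h1S (he ▸ h), mem_univ x⟩
        · exact Finset.mem_erase.mpr ⟨fun he => h1T (he ▸ h), mem_univ x⟩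
      have hcu : (univ.erase (1 : ZMod n)).card = n - 1 := by
        rw [Finset.card_erase_of_mem (mem_univ _), Finset.card_univ, ZMod.card]
      have hle := Finset.card_le_card hsub
      rw [Finset.card_union_of_disjoint hdisj, hcu, hcardS, hcardA, hcardT] at hle
      have hda := hdeg a
      have hdb := hdeg b
      omega
    obtain ⟨j, hj⟩ := hinter
    rw [Finset.mem_inter] at hj
    obtain ⟨i, hiA, hij⟩ := Finset.mem_image.mp hj.1
    refine ⟨i, ?_, ?_⟩
    · simpa [hA] using (Finset.mem_filter.mp hiA).2
    · rw [hij]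
      simpa [hT] using (Finset.mem_filter.mp hj.2).2
  obtain ⟨q, hqa, hqb⟩ := hpigeon
  set M := q.val with hM
  have hMlt : M < n := ZMod.val_lt q
  have hq_cast : ((M : ℕ) : ZMod n) = q := ZMod.natCast_rightInverse q
  have hMge : 2 ≤ M := by
    by_contra h
    push_neg at h
    interval_cases M
    · have : q = 0 := by rw [← hq_cast]; simp
      rw [this] at hqa; exact H.irrefl hqa
    · have : q = 1 := by rw [← hq_cast]; simp
      rw [this] at hqa; exact hbad hqa
  set g : ZMod n → V := f ∘ rev M with hg
  have hgbij : Function.Bijective g := hf.comp (rev_involutive hMlt).bijective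
  refine ⟨g, hgbij, ?_⟩
  have h0bad : (0 : ZMod n) ∈ badSet H f := by
    simp only [badSet, mem_filter, mem_univ, true_and]
    rw [zero_add]; exact hbad
  apply lt_of_le_of_lt (b := ((badSet H f).erase 0).card)
  · apply Finset.card_le_card_of_injOn (rev (M - 1))
    · -- maps to
      intro t ht
      simp only [badSet, Finset.mem_coe, mem_filter, mem_univ, true_and] at ht
      have hult : t.val < n := ZMod.val_lt t
      have ht_cast : ((t.val : ℕ) : ZMod n) = t := ZMod.natCast_rightInverse t
      rcases Nat.lt_or_ge t.val 1 with h0 | h1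
      · -- t.val = 0 : contradiction
        exfalso
        have ht0 : t = 0 := by rw [← ht_cast]; simp [Nat.lt_one_iff.mp h0]
        subst ht0
        have hgt : g 0 = a := by
          simp only [hg, Function.comp_apply]
          rw [rev_of_not_mem (by simp)]
        have hgt1 : g (0 + 1) = f q := by
          simp only [hg, Function.comp_apply, zero_add]
          have hv1 : (1 : ZMod n).val = 1 := ZMod.val_one n
          rw [rev_of_mem hMlt (le_of_eq hv1.symm) (by omega), hv1]
          rw [show M + 1 - 1 = M by omega, hq_cast]
        rw [hgt, hgt1] at ht
        exact ht hqa
      rcases Nat.lt_or_ge t.val M with hlt | hge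
      · -- 1 ≤ t.val ≤ M - 1
        have ht1val : (t + 1).val = t.val + 1 := val_add_one_of_ne (by omega) t (by omega)
        have hgt : g t = f ((M + 1 - t.val : ℕ) : ZMod n) := by
          simp only [hg, Function.comp_apply]
          rw [rev_of_mem hMlt h1 (by omega)]
        have hgt1 : g (t + 1) = f ((M - t.val : ℕ) : ZMod n) := by
          simp only [hg, Function.comp_apply]
          rw [rev_of_mem hMlt (by omega) (by omega), ht1val]
          congr 2
          omega
        have hss : ((M - t.val : ℕ) : ZMod n) + 1 = ((M + 1 - t.val : ℕ) : ZMod n) := by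
          have h' : ((M - t.val : ℕ) : ZMod n) + 1 = ((M - t.val + 1 : ℕ) : ZMod n) := by
            push_cast; ring
          rw [h']; congr 1; omega
        rw [rev_of_mem (by omega) h1 (by omega)]
        apply Finset.mem_erase.mpr
        constructor
        · intro hzero
          have := congrArg ZMod.val hzero
          rw [ZMod.val_cast_of_lt (by omega), ZMod.val_zero] at this
          omega
        · simp only [badSet, mem_filter, mem_univ, true_and]
          rw [show (M - 1 + 1 - t.val : ℕ) = M - t.val by omega, hss]
          intro hadj
          rw [hgt, hgt1] at ht
          exact ht hadj.symm
      rcases Nat.eq_or_lt_of_le hge with heq | hgt'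
      · -- t.val = M : contradiction
        exfalso
        have htq : t = q := by rw [← ht_cast, ← heq, hq_cast]
        have hgt : g t = b := by
          simp only [hg, Function.comp_apply]
          rw [rev_of_mem hMlt (by omega) (by omega)]
          rw [show (M + 1 - t.val : ℕ) = 1 by omega]
          simp [hb]
        have hgt1 : g (t + 1) = f (q + 1) := by
          simp only [hg, Function.comp_apply, htq]
          congr 1
          rcases Nat.eq_or_lt_of_le (show M + 1 ≤ n by omega) with he | hl
          · have : (q + 1).val = 0 := val_add_one_eq_zero (by omega) q (by omega)
            exact rev_of_not_mem (by omega)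
          · have : (q + 1).val = M + 1 := val_add_one_of_ne (by omega) q (by omega)
            exact rev_of_not_mem (by omega)
        rw [hgt, hgt1] at ht
        exact ht hqb
      · -- t.val ≥ M + 1
        have hid : rev (n := n) M t = t := rev_of_not_mem (by omega)
        have hid1 : rev (n := n) M (t + 1) = t + 1 := by
          apply rev_of_not_mem
          rcases Nat.eq_or_lt_of_le (show t.val + 1 ≤ n by omega) with he | hl
          · have : (t + 1).val = 0 := val_add_one_eq_zero (by omega) t (by omega)
            omega
          · have : (t + 1).val = t.val + 1 := val_add_one_of_ne (by omega) t (by omega)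
            omega
        rw [rev_of_not_mem (by omega)]
        apply Finset.mem_erase.mpr
        refine ⟨?_, ?_⟩
        · intro hzero; rw [hzero, ZMod.val_zero] at hge; omega
        · simp only [badSet, mem_filter, mem_univ, true_and]
          simpa only [hg, Function.comp_apply, hid, hid1] using ht
    · -- injectivity
      exact Set.InjOn.mono (Set.subset_univ _)
        ((rev_involutive (by omega : M - 1 < n)).injective.injOn)
  · rw [Finset.card_erase_of_mem h0bad]
    have hne : (badSet H f).card ≠ 0 := by
      intro h
      rw [Finset.card_eq_zero] at h
      rw [h] at h0bad
      exact absurd h0bad (Finset.notMem_empty _)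
    omega


/-- Descent step: if `f` has a bad position, there is a better ordering. -/
private lemma descent [NeZero n] (hn : 4 ≤ n) (H : SimpleGraph V) [DecidableRel H.Adj]
    (hcard : Fintype.card V = n) (hdeg : ∀ v, n ≤ 2 * H.degree v)
    (f : ZMod n → V) (hf : Function.Bijective f) (p : ZMod n) (hp : p ∈ badSet H f) :
    ∃ g : ZMod n → V, Function.Bijective g ∧
      (badSet H g).card < (badSet H f).card := by
  set F : ZMod n → V := fun t => f (p + t) with hF
  have hFbij : Function.Bijective F := hf.comp (Equiv.addLeft p).bijective
  have hcards : (badSet H F).card = (badSet H f).card := by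
    apply Finset.card_bij (fun t _ => p + t)
    · intro t ht
      simp only [badSet, mem_filter, mem_univ, true_and] at ht ⊢
      have : p + (t + 1) = (p + t) + 1 := by ring
      rw [hF] at ht
      simp only [this] at ht
      exact ht
    · intro t _ s _ h
      exact add_left_cancel h
    · intro s hs
      refine ⟨s - p, ?_, by ring⟩
      simp only [badSet, mem_filter, mem_univ, true_and] at hs ⊢
      rw [hF]
      simp only [show p + (s - p) = s by ring, show p + (s - p + 1) = s + 1 by ring]
      exact hs
  have hFbad : ¬ H.Adj (F 0) (F 1) := by
    simp only [badSet, mem_filter, mem_univ, true_and] at hp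
    simp only [hF, add_zero]
    exact hp
  obtain ⟨g, hgbij, hlt⟩ := descent_at_zero hn H hcard hdeg F hFbij hFbad
  exact ⟨g, hgbij, by omega⟩

/-- Dirac's theorem, in cyclic-ordering form. -/
private lemma dirac_cycle (hn : 4 ≤ n) (H : SimpleGraph V) [DecidableRel H.Adj]
    (hcard : Fintype.card V = n) (hdeg : ∀ v, n ≤ 2 * H.degree v) :
    ∃ f : ZMod n → V, Function.Bijective f ∧ ∀ i, H.Adj (f i) (f (i + 1)) := by
  haveI : NeZero n := ⟨by omega⟩
  have key : ∀ c (f : ZMod n → V), Function.Bijective f → (badSet H f).card = c →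
      ∃ g : ZMod n → V, Function.Bijective g ∧ badSet H g = ∅ := by
    intro c
    induction c using Nat.strong_induction_on with
    | _ c ih =>
      intro f hf hc
      rcases Finset.eq_empty_or_nonempty (badSet H f) with he | ⟨p, hp⟩
      · exact ⟨f, hf, he⟩
      · obtain ⟨g, hgbij, hlt⟩ := descent hn H hcard hdeg f hf p hp
        exact ih (badSet H g).card (by omega) g hgbij rfl
  have e : ZMod n ≃ V := Fintype.equivOfCardEq (by rw [ZMod.card, hcard])
  obtain ⟨g, hgbij, hempty⟩ := key _ e e.bijective rfl
  refine ⟨g, hgbij, fun i => ?_⟩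
  by_contra h
  have : i ∈ badSet H g := by simp [badSet, h]
  rw [hempty] at this
  exact absurd this (Finset.notMem_empty _)


private lemma parity_flip {n : ℕ} [NeZero n] (hn : 4 ≤ n) (heven : Even n) (i : ZMod n) :
    Even ((i + 1).val) ↔ ¬ Even i.val := by
  by_cases h : i.val = n - 1
  · rw [val_add_one_eq_zero (by omega) i h, h]
    obtain ⟨k, hk⟩ := heven
    constructor
    · intro _ he
      obtain ⟨m, hm⟩ := he
      omega
    · intro _; exact Even.zero
  · rw [val_add_one_of_ne (by omega) i h, Nat.even_add_one]

private lemma pm_of_alt {n : ℕ} [NeZero n] {V : Type} (f : ZMod n → V)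
    (hbij : Function.Bijective f) (hne : ∀ i, f i ≠ f (i + 1)) (P : ℕ → Prop)
    (hP : ∀ i : ZMod n, P ((i + 1).val) ↔ ¬ P i.val) :
    IsPM (SimpleGraph.fromEdgeSet {x | ∃ i : ZMod n, P i.val ∧ x = s(f i, f (i + 1))}) := by
  intro v
  obtain ⟨j, rfl⟩ := hbij.2 v
  by_cases hj : P j.val
  · refine ⟨f (j + 1), ⟨?_, ?_⟩⟩
    · simp only [SimpleGraph.fromEdgeSet_adj]
      exact ⟨⟨j, hj, rfl⟩, hne j⟩
    · intro w hw
      simp only [SimpleGraph.fromEdgeSet_adj] at hw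
      obtain ⟨⟨i, hi, hx⟩, hvw⟩ := hw
      rcases Sym2.eq_iff.mp hx with ⟨h1, h2⟩ | ⟨h1, h2⟩
      · rw [hbij.1 h1]; exact h2
      · exfalso
        have : j = i + 1 := hbij.1 h1
        rw [this] at hj
        exact (hP i).mp hj hi
  · set i0 := j - 1 with hi0def
    have hi0 : i0 + 1 = j := by ring
    have hP0 : P i0.val := by
      by_contra h
      exact hj (hi0 ▸ (hP i0).mpr h)
    refine ⟨f i0, ⟨?_, ?_⟩⟩
    · simp only [SimpleGraph.fromEdgeSet_adj]
      refine ⟨⟨i0, hP0, ?_⟩, ?_⟩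
      · rw [hi0, Sym2.eq_swap]
      · rw [← hi0]; exact (hne i0).symm
    · intro w hw
      simp only [SimpleGraph.fromEdgeSet_adj] at hw
      obtain ⟨⟨i, hi, hx⟩, hvw⟩ := hw
      rcases Sym2.eq_iff.mp hx with ⟨h1, h2⟩ | ⟨h1, h2⟩
      · exact absurd (hbij.1 h1 ▸ hi) hj
      · have : i = i0 := by
          have hj' : j = i + 1 := hbij.1 h1
          rw [hi0def, hj']; ring
        rw [this] at h2; exact h2

end Dirac


/-- Every tournament of `n/2 - 1` rounds (pairwise edge-disjoint perfect
matchings of `K_n`, `n ≥ 4` even) can be extended by two further rounds: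
there are two perfect matchings `N` and `N'` of `K_n` such that
`M_1, …, M_{n/2-1}, N, N'` are pairwise edge-disjoint. -/
theorem matching_two_more_rounds (n : ℕ) (hn : 4 ≤ n) (heven : Even n)
    (M : Fin (n / 2 - 1) → SimpleGraph (Fin n))
    (hM : ∀ i, IsPM (M i))
    (hdisj : ∀ i j : Fin (n / 2 - 1), i ≠ j → Disjoint (M i).edgeSet (M j).edgeSet) :
    ∃ N N' : SimpleGraph (Fin n), IsPM N ∧ IsPM N' ∧
      (∀ i, Disjoint N.edgeSet (M i).edgeSet) ∧
      (∀ i, Disjoint N'.edgeSet (M i).edgeSet) ∧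
      Disjoint N.edgeSet N'.edgeSet := by
  classical
  haveI : NeZero n := ⟨by omega⟩
  obtain ⟨k, hk⟩ := heven
  set G : SimpleGraph (Fin n) := ⨆ i, M i with hG
  -- degree bound for the feasibility graph
  have hdeg : ∀ v, n ≤ 2 * Gᶜ.degree v := by
    intro v
    have hcompl : Gᶜ.degree v = Fintype.card (Fin n) - 1 - G.degree v := by
      convert SimpleGraph.degree_compl G v using 2
    have hGdeg : G.degree v ≤ n / 2 - 1 := by
      rw [SimpleGraph.degree]
      have hsub : G.neighborFinset v ⊆
          Finset.univ.biUnion (fun i => (M i).neighborFinset v) := by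
        intro w hw
        rw [SimpleGraph.mem_neighborFinset] at hw
        rw [hG, SimpleGraph.iSup_adj] at hw
        obtain ⟨i, hi⟩ := hw
        exact Finset.mem_biUnion.mpr
          ⟨i, Finset.mem_univ i, (SimpleGraph.mem_neighborFinset _ _ _).mpr hi⟩
      calc (G.neighborFinset v).card
          ≤ (Finset.univ.biUnion (fun i => (M i).neighborFinset v)).card :=
            Finset.card_le_card hsub
        _ ≤ ∑ i, ((M i).neighborFinset v).card := Finset.card_biUnion_le
        _ ≤ ∑ _i : Fin (n / 2 - 1), 1 := by
            apply Finset.sum_le_sum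
            intro i _
            obtain ⟨w, hw, huniq⟩ := hM i v
            apply le_of_eq
            apply Finset.card_eq_one.mpr ⟨w, ?_⟩
            ext x
            simp only [SimpleGraph.mem_neighborFinset, Finset.mem_singleton]
            exact ⟨fun hx => huniq x hx, fun hx => hx ▸ hw⟩
        _ = n / 2 - 1 := by simp
    rw [hcompl, Fintype.card_fin]
    omega
  obtain ⟨f, hfbij, hfadj⟩ := dirac_cycle hn Gᶜ (Fintype.card_fin n) hdeg
  have hne : ∀ i, f i ≠ f (i + 1) := fun i => (hfadj i).ne
  set N : SimpleGraph (Fin n) :=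
    SimpleGraph.fromEdgeSet {x | ∃ i : ZMod n, Even i.val ∧ x = s(f i, f (i + 1))} with hN
  set N' : SimpleGraph (Fin n) :=
    SimpleGraph.fromEdgeSet {x | ∃ i : ZMod n, ¬ Even i.val ∧ x = s(f i, f (i + 1))} with hN'
  have hPMN : IsPM N := pm_of_alt f hfbij hne Even (parity_flip hn ⟨k, hk⟩)
  have hPMN' : IsPM N' := by
    apply pm_of_alt f hfbij hne (fun m => ¬ Even m)
    intro i
    rw [parity_flip hn ⟨k, hk⟩ i, not_not]
  -- edges of N and N' are edges of H
  have hsubH : ∀ (P : ℕ → Prop),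
      {x : Sym2 (Fin n) | ∃ i : ZMod n, P i.val ∧ x = s(f i, f (i + 1))} ⊆ Gᶜ.edgeSet := by
    intro P x hx
    obtain ⟨i, -, rfl⟩ := hx
    exact (Gᶜ.mem_edgeSet).mpr (hfadj i)
  have hHdisj : ∀ j, Disjoint Gᶜ.edgeSet (M j).edgeSet := by
    intro j
    rw [SimpleGraph.disjoint_edgeSet]
    exact disjoint_compl_left.mono_right (hG ▸ le_iSup M j)
  have hNsub : ∀ (P : ℕ → Prop), (SimpleGraph.fromEdgeSet
      {x : Sym2 (Fin n) | ∃ i : ZMod n, P i.val ∧ x = s(f i, f (i + 1))}).edgeSet ⊆ Gᶜ.edgeSet := by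
    intro P
    rw [SimpleGraph.edgeSet_fromEdgeSet]
    exact (Set.diff_subset).trans (hsubH P)
  refine ⟨N, N', hPMN, hPMN', ?_, ?_, ?_⟩
  · intro j
    exact Set.disjoint_of_subset_left (hNsub Even) (hHdisj j)
  · intro j
    exact Set.disjoint_of_subset_left (hNsub (fun m => ¬ Even m)) (hHdisj j)
  · rw [Set.disjoint_left]
    intro x hxN hxN'
    rw [hN, SimpleGraph.edgeSet_fromEdgeSet] at hxN
    rw [hN', SimpleGraph.edgeSet_fromEdgeSet] at hxN'
    obtain ⟨⟨i, hi, hx⟩, -⟩ := hxN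
    obtain ⟨⟨i', hi', hx'⟩, -⟩ := hxN'
    rw [hx] at hx'
    rcases Sym2.eq_iff.mp hx' with ⟨h1, h2⟩ | ⟨h1, h2⟩
    · exact hi' (hfbij.1 h1 ▸ hi)
    · have e1 : i = i' + 1 := hfbij.1 h1
      have e2 : i + 1 = i' := hfbij.1 h2
      have h2i : i' + 2 = i' := by
        calc i' + 2 = (i' + 1) + 1 := by ring
          _ = i + 1 := by rw [e1]
          _ = i' := e2
      have h20 : (2 : ZMod n) = 0 :=
        add_left_cancel (a := i') (b := (2 : ZMod n)) (c := 0) (by rw [add_zero]; exact h2i)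
      have hval : ((2 : ℕ) : ZMod n).val = 2 := ZMod.val_cast_of_lt (by omega)
      rw [show ((2 : ℕ) : ZMod n) = (2 : ZMod n) by push_cast; ring, h20, ZMod.val_zero] at hval
      omega
end

section
/- Let k ≥ 3 and let n be a positive integer divisible by k. Then for any family F_1, …, F_r of pairwise edge-disjoint K_k-factors of the complete graph K_n, one has (2k² − 3k − 1) · max(1, ⌊n/(k(k−1))⌋) ≥ (k−1) · r. In other words, the number of rounds guaranteed by the greedy algorithm is at least a (k−1)/(2k²−3k−1) fraction of the maximum possible number of rounds. -/
/-- Two vertices lie in a common block of the partition `P`. -/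
def SameBlock {n : ℕ} (P : Finpartition (Finset.univ : Finset (Fin n)))
    (u v : Fin n) : Prop :=
  ∃ b ∈ P.parts, u ∈ b ∧ v ∈ b

/-- A `K_k`-factor of `K_n`: a partition of the vertex set into blocks of size `k`. -/
def IsKkFactor {n : ℕ} (k : ℕ) (P : Finpartition (Finset.univ : Finset (Fin n))) : Prop :=
  ∀ b ∈ P.parts, b.card = k

/-- Two rounds (partitions) are edge-disjoint: no two distinct vertices lie in a
common block in both of them. -/
def RoundsEdgeDisjoint {n : ℕ} (P Q : Finpartition (Finset.univ : Finset (Fin n))) : Prop :=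
  ∀ u v : Fin n, u ≠ v → SameBlock P u v → ¬ SameBlock Q u v

/-- For any family `F_1, …, F_r` of pairwise edge-disjoint `K_k`-factors of
`K_n` (`k ≥ 3`, `k ∣ n`) one has
`(2k² − 3k − 1) · max(1, ⌊n/(k(k−1))⌋) ≥ (k−1) · r`: the greedy guarantee is
at least a `(k−1)/(2k²−3k−1)` fraction of the optimum number of rounds. -/
theorem greedy_social_golfer_approximation (k n : ℕ) (hk : 3 ≤ k) (hn : 0 < n)
    (hkn : k ∣ n) (r : ℕ)
    (F : Fin r → Finpartition (Finset.univ : Finset (Fin n)))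
    (hF : ∀ i, IsKkFactor k (F i))
    (hdisj : ∀ i j : Fin r, i ≠ j → RoundsEdgeDisjoint (F i) (F j)) :
    (k - 1) * r ≤ (2 * k ^ 2 - 3 * k - 1) * max 1 (n / (k * (k - 1))) := by
  classical
  -- replace k by c + 3
  obtain ⟨c, rfl⟩ : ∃ c, k = c + 3 := ⟨k - 3, by omega⟩
  -- replace n by (c+3) * e
  obtain ⟨e, rfl⟩ := hkn
  have he : 1 ≤ e := by nlinarith [hn]
  -- pick a vertex
  have hnpos : 0 < (c + 3) * e := hn
  set v : Fin ((c+3)*e) := ⟨0, hnpos⟩ with hv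
  -- the block containing v in each round
  have hb : ∀ i : Fin r, ∃ b ∈ (F i).parts, v ∈ b := fun i =>
    (F i).exists_mem (Finset.mem_univ v)
  choose b hbmem hbv using hb
  set N : Fin r → Finset (Fin ((c+3)*e)) := fun i => (b i).erase v with hN
  have hcard : ∀ i, (N i).card = c + 2 := by
    intro i
    have := hF i (b i) (hbmem i)
    simp only [hN]
    rw [Finset.card_erase_of_mem (hbv i), this]
    omega
  have hdisjN : ∀ i ∈ (Finset.univ : Finset (Fin r)), ∀ j ∈ (Finset.univ : Finset (Fin r)),
      i ≠ j → Disjoint (N i) (N j) := by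
    intro i _ j _ hij
    refine Finset.disjoint_left.2 ?_
    intro u hui huj
    have hu_ne : u ≠ v := Finset.ne_of_mem_erase hui
    exact hdisj i j hij u v hu_ne
      ⟨b i, hbmem i, Finset.mem_of_mem_erase hui, hbv i⟩
      ⟨b j, hbmem j, Finset.mem_of_mem_erase huj, hbv j⟩
  have hsub : (Finset.univ : Finset (Fin r)).biUnion N ⊆ Finset.univ.erase v := by
    intro u hu
    obtain ⟨i, _, hui⟩ := Finset.mem_biUnion.1 hu
    exact Finset.mem_erase.2 ⟨Finset.ne_of_mem_erase hui, Finset.mem_univ u⟩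
  have key : (c + 2) * r ≤ (c+3)*e - 1 := by
    have h1 : ((Finset.univ : Finset (Fin r)).biUnion N).card = (c + 2) * r := by
      rw [Finset.card_biUnion hdisjN]
      simp [hcard, Finset.sum_const, mul_comm]
    have h2 := Finset.card_le_card hsub
    rw [h1] at h2
    simpa [Finset.card_erase_of_mem (Finset.mem_univ v), Finset.card_univ] using h2
  have key' : (c + 2) * r < (c+3)*e := lt_of_le_of_lt key (Nat.sub_lt hn one_pos)
  -- arithmetic part
  have hk1 : c + 3 - 1 = c + 2 := rfl
  rw [hk1]
  have hq : ((c+3)*e) / ((c+3)*(c+2)) = e / (c+2) :=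
    Nat.mul_div_mul_left _ _ (by omega)
  rw [hq]
  have hco : 2 * (c+3) ^ 2 - 3 * (c+3) - 1 = 2 * c^2 + 9 * c + 8 := by
    have h : (c+3)^2 = c^2 + 6*c + 9 := by ring
    rw [h]
    generalize c^2 = s
    omega
  rw [hco]
  set q := e / (c+2) with hqdef
  have hmod : (c+2) * q + e % (c+2) = e := Nat.div_add_mod e (c+2)
  have hmodlt : e % (c+2) < c+2 := Nat.mod_lt _ (by omega)
  rcases Nat.eq_zero_or_pos q with hq0 | hq1
  · -- q = 0 : e ≤ c+1
    rw [hq0]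
    simp only [max_self, mul_one, Nat.max_eq_left (Nat.zero_le 1)]
    have he' : e ≤ c + 1 := by
      have := Nat.div_eq_zero_iff.1 (show e / (c + 2) = 0 by rw [hqdef] at hq0; exact hq0)
      omega
    nlinarith [key']
  · rw [Nat.max_eq_right hq1]
    have he' : e ≤ (c+2) * q + c + 1 := by
      have h1 := hmodlt
      generalize (c+2) * q = w at hmod
      omega
    have hint : (c+3) * (c+1) * 1 ≤ (c+3) * (c+1) * q := by
      exact Nat.mul_le_mul_left _ hq1
    nlinarith [key', he', hint]
end

section
/- Let G be a finite simple graph on n vertices and let m be a positive integer with m ∣ n. Suppose that every connected component C of G admits a proper vertex coloring with m colors in which every color class (within C) has size ⌊|C|/m⌋ or ⌈|C|/m⌉. Then G admits a proper vertex coloring with m colors in which every color class has size exactly n/m. -/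
open Finset in
private lemma exists_perm_mem_iff {m : ℕ} (B D : Finset (Fin m)) (h : B.card = D.card) :
    ∃ σ : Equiv.Perm (Fin m), ∀ x, σ x ∈ D ↔ x ∈ B := by
  classical
  let e : {x // x ∈ B} ≃ {x // x ∈ D} := Finset.equivOfCardEq h
  refine ⟨e.extendSubtype, fun x => ?_⟩
  constructor
  · intro hx
    by_contra hxB
    exact Equiv.extendSubtype_not_mem e x hxB hx
  · intro hx
    exact Equiv.extendSubtype_mem e x hx

private lemma sum_fiber {V : Type} [Fintype V] {m : ℕ} (S : Set V) (g : V → Fin m) :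
    ∑ j : Fin m, {v ∈ S | g v = j}.ncard = S.ncard := by
  classical
  have h : ∀ j : Fin m, {v ∈ S | g v = j} = ↑(S.toFinset.filter (fun v => g v = j)) := by
    intro j; ext v; simp [Set.mem_toFinset]
  simp_rw [h, Set.ncard_coe_finset]
  rw [Set.ncard_eq_toFinset_card' S]
  exact (Finset.card_eq_sum_card_fiberwise (fun x _ => Finset.mem_univ (g x))).symm

/-- If every connected component `C` of a finite graph `G` on `n` vertices
admits a proper `m`-coloring whose color classes (within `C`) all have size
`⌊|C|/m⌋` or `⌈|C|/m⌉`, and `m ∣ n`, then `G` admits a proper `m`-coloring in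
which every color class has size exactly `n/m`. -/
theorem equitable_coloring_of_components {V : Type} [Fintype V]
    (G : SimpleGraph V) (m : ℕ) (hm : 0 < m) (hdvd : m ∣ Fintype.card V)
    (hcomp : ∀ c : G.ConnectedComponent, ∃ f : V → Fin m,
      (∀ u v : V, u ∈ c.supp → G.Adj u v → f u ≠ f v) ∧
      (∀ j : Fin m,
        {v ∈ c.supp | f v = j}.ncard = c.supp.ncard / m ∨
        {v ∈ c.supp | f v = j}.ncard = (c.supp.ncard + m - 1) / m)) :
    ∃ f : V → Fin m, (∀ u v : V, G.Adj u v → f u ≠ f v) ∧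
      ∀ j : Fin m, {v | f v = j}.ncard = Fintype.card V / m := by
  classical
  have aux : ∀ s : Finset G.ConnectedComponent,
      ∃ f : V → Fin m, ∃ B : Finset (Fin m),
        (∀ u v : V, G.connectedComponentMk u ∈ s → G.Adj u v → f u ≠ f v) ∧
        B.card = {v | G.connectedComponentMk v ∈ s}.ncard % m ∧
        ∀ j : Fin m, {v | G.connectedComponentMk v ∈ s ∧ f v = j}.ncard
            = {v | G.connectedComponentMk v ∈ s}.ncard / m + (if j ∈ B then 1 else 0) := by
    intro s
    induction s using Finset.induction_on with
    | empty =>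
      refine ⟨fun _ => ⟨0, hm⟩, ∅, by simp, ?_, ?_⟩
      · simp [Set.ncard_empty]
      · intro j
        simp [Set.ncard_empty]
    | @insert c s hc ih =>
      obtain ⟨f, B, hf, hf2, hsz⟩ := ih
      obtain ⟨g, hg, hgsz⟩ := hcomp c
      set W : Set V := {v | G.connectedComponentMk v ∈ s} with hW
      set N : ℕ := W.ncard with hN
      set k : ℕ := c.supp.ncard with hk
      set a : ℕ := k / m with ha
      have hB : B.card = N % m := hf2
      have hdisj : Disjoint c.supp W := by
        rw [Set.disjoint_left]
        intro v hv hvW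
        rw [SimpleGraph.ConnectedComponent.mem_supp_iff] at hv
        rw [hW, Set.mem_setOf_eq, hv] at hvW
        exact hc hvW
      have hsupp_fin : c.supp.Finite := Set.toFinite _
      have hW_fin : W.Finite := Set.toFinite _
      have hunion : {v | G.connectedComponentMk v ∈ insert c s} = c.supp ∪ W := by
        ext v
        simp [SimpleGraph.ConnectedComponent.mem_supp_iff, hW, Finset.mem_insert]
      have hNnew : {v | G.connectedComponentMk v ∈ insert c s}.ncard = k + N := by
        rw [hunion, Set.ncard_union_eq hdisj hsupp_fin hW_fin]
      -- ceiling is a or a+1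
      have hceil : (k + m - 1) / m = a ∨ (k + m - 1) / m = a + 1 := by
        have h1 : m * a + k % m = k := Nat.div_add_mod k m
        have h2 : k % m < m := Nat.mod_lt _ hm
        rcases Nat.eq_zero_or_pos (k % m) with h0 | h0
        · left
          have e0 : k + m - 1 = m * a + (m - 1) := by omega
          have e1 : (m - 1) / m = 0 := Nat.div_eq_of_lt (by omega)
          rw [e0, Nat.mul_add_div hm, e1]
          omega
        · right
          have hma : m * (a + 1) = m * a + m := by ring
          have e0 : k + m - 1 = m * (a + 1) + (k % m - 1) := by omega
          have e1 : (k % m - 1) / m = 0 := Nat.div_eq_of_lt (by omega)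
          rw [e0, Nat.mul_add_div hm, e1]
      -- big classes of g
      set B₀ : Finset (Fin m) :=
        Finset.univ.filter (fun j => {v ∈ c.supp | g v = j}.ncard = a + 1) with hB₀def
      have hsize0 : ∀ j : Fin m,
          {v ∈ c.supp | g v = j}.ncard = a + (if j ∈ B₀ then 1 else 0) := by
        intro j
        by_cases hj : j ∈ B₀
        · rw [if_pos hj]
          exact (Finset.mem_filter.mp hj).2
        · rw [if_neg hj]
          have hj' : ¬ {v ∈ c.supp | g v = j}.ncard = a + 1 := by
            intro h; exact hj (Finset.mem_filter.mpr ⟨Finset.mem_univ _, h⟩)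
          rcases hgsz j with h | h
          · simpa using h
          · rcases hceil with hc' | hc'
            · rw [hc'] at h; simpa using h
            · rw [hc'] at h; exact absurd h hj'
      have hB₀card : B₀.card = k % m := by
        have hsum := sum_fiber c.supp g
        rw [← hk] at hsum
        have hthis : ∑ j : Fin m, (a + (if j ∈ B₀ then 1 else 0)) = k := by
          rw [← hsum]; exact Finset.sum_congr rfl (fun j _ => (hsize0 j).symm)
        rw [Finset.sum_add_distrib] at hthis
        simp only [Finset.sum_const, Finset.card_univ, Fintype.card_fin,
          smul_eq_mul] at hthis
        have hsum2 : ∑ j : Fin m, (if j ∈ B₀ then (1 : ℕ) else 0) = B₀.card := by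
          simp
        rw [hsum2] at hthis
        have h1 : m * a + k % m = k := Nat.div_add_mod k m
        omega
      have hr : k % m < m := Nat.mod_lt _ hm
      have ht : N % m < m := Nat.mod_lt _ hm
      have hBc : Bᶜ.card = m - N % m := by
        rw [Finset.card_compl, Fintype.card_fin, hB]
      have h1 : m * a + k % m = k := Nat.div_add_mod k m
      have h2 : m * (N / m) + N % m = N := Nat.div_add_mod N m
      -- choose target set D and new big set B'
      have key : ∃ D B' : Finset (Fin m), D.card = k % m ∧
          B'.card = (k + N) % m ∧
          (∀ j : Fin m, (if j ∈ B then 1 else 0) + (if j ∈ D then 1 else 0)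
            = ((k + N) / m - a - N / m) + (if j ∈ B' then 1 else 0)) ∧
          (k + N) / m = a + N / m + ((k + N) / m - a - N / m) := by
        by_cases htr : N % m + k % m < m
        · obtain ⟨D, hDsub, hDcard⟩ :=
            Finset.exists_subset_card_eq (s := Bᶜ) (n := k % m) (by rw [hBc]; omega)
          have hdisjBD : Disjoint B D := by
            rw [Finset.disjoint_left]
            intro x hx hxD
            exact (Finset.mem_compl.mp (hDsub hxD)) hx
          have hmm2 : m * (a + N / m) = m * a + m * (N / m) := by ring
          have hmod : (k + N) % m = N % m + k % m := by
            have e : k + N = (N % m + k % m) + m * (a + N / m) := by omega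
            rw [e, Nat.add_mul_mod_self_left, Nat.mod_eq_of_lt htr]
          have hdivv : (k + N) / m = a + N / m := by
            have e : k + N = (N % m + k % m) + m * (a + N / m) := by omega
            rw [e, Nat.add_mul_div_left _ _ hm, Nat.div_eq_of_lt htr, zero_add]
          refine ⟨D, B ∪ D, hDcard, ?_, ?_, by omega⟩
          · rw [Finset.card_union_of_disjoint hdisjBD, hB, hDcard, hmod]
          · intro j
            have hd : (k + N) / m - a - N / m = 0 := by omega
            rw [hd, zero_add]
            by_cases hjB : j ∈ B <;> by_cases hjD : j ∈ D
            · exact absurd hjD (Finset.disjoint_left.mp hdisjBD hjB)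
            · simp [Finset.mem_union, hjB, hjD]
            · simp [Finset.mem_union, hjB, hjD]
            · simp [Finset.mem_union, hjB, hjD]
        · obtain ⟨E, hEsub, hEcard⟩ :=
            Finset.exists_subset_card_eq (s := B) (n := N % m + k % m - m) (by rw [hB]; omega)
          have hdisjE : Disjoint Bᶜ E := by
            rw [Finset.disjoint_left]
            intro x hx hxE
            exact (Finset.mem_compl.mp hx) (hEsub hxE)
          have hmm2 : m * (a + N / m + 1) = m * a + m * (N / m) + m := by ring
          have hmod : (k + N) % m = N % m + k % m - m := by
            have e : k + N = (N % m + k % m - m) + m * (a + N / m + 1) := by omega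
            rw [e, Nat.add_mul_mod_self_left, Nat.mod_eq_of_lt (by omega)]
          have hdivv : (k + N) / m = a + N / m + 1 := by
            have e : k + N = (N % m + k % m - m) + m * (a + N / m + 1) := by omega
            rw [e, Nat.add_mul_div_left _ _ hm, Nat.div_eq_of_lt (by omega), zero_add]
          refine ⟨Bᶜ ∪ E, E, ?_, by omega, ?_, by omega⟩
          · rw [Finset.card_union_of_disjoint hdisjE, hBc, hEcard]; omega
          · intro j
            have hd : (k + N) / m - a - N / m = 1 := by omega
            rw [hd]
            by_cases hjB : j ∈ B <;> by_cases hjE : j ∈ E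
            · simp [Finset.mem_union, Finset.mem_compl, hjB, hjE]
            · simp [Finset.mem_union, Finset.mem_compl, hjB, hjE]
            · exact absurd (hEsub hjE) hjB
            · simp [Finset.mem_union, Finset.mem_compl, hjB, hjE]
      obtain ⟨D, B', hDcard, hB'card, hindic, hdiv⟩ := key
      obtain ⟨σ, hσ⟩ := exists_perm_mem_iff B₀ D (hB₀card.trans hDcard.symm)
      refine ⟨fun v => if v ∈ c.supp then σ (g v) else f v, B', ?_, ?_, ?_⟩
      · -- proper
        intro u v hu hadj
        have hmk : G.connectedComponentMk u = G.connectedComponentMk v :=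
          SimpleGraph.ConnectedComponent.connectedComponentMk_eq_of_adj hadj
        by_cases huc : u ∈ c.supp
        · have hvc : v ∈ c.supp := by
            rw [SimpleGraph.ConnectedComponent.mem_supp_iff] at *
            rw [← hmk]; exact huc
          simp only [if_pos huc, if_pos hvc]
          intro h
          exact hg u v huc hadj (σ.injective h)
        · have hvc : v ∉ c.supp := by
            rw [SimpleGraph.ConnectedComponent.mem_supp_iff] at *
            rw [← hmk]; exact huc
          simp only [if_neg huc, if_neg hvc]
          have hus : G.connectedComponentMk u ∈ s := by
            rcases Finset.mem_insert.mp hu with h | h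
            · exact absurd ((SimpleGraph.ConnectedComponent.mem_supp_iff _ _).mpr h) huc
            · exact h
          exact hf u v hus hadj
      · rw [hNnew]; exact hB'card
      · intro j
        have hsplit : {v | G.connectedComponentMk v ∈ insert c s ∧
            (if v ∈ c.supp then σ (g v) else f v) = j}
            = {v ∈ c.supp | g v = σ.symm j}
              ∪ {v | G.connectedComponentMk v ∈ s ∧ f v = j} := by
          ext v
          simp only [Set.mem_setOf_eq, Set.mem_union, Finset.mem_insert]
          constructor
          · rintro ⟨h1' | h1', h2'⟩
            · have hvc : v ∈ c.supp :=
                (SimpleGraph.ConnectedComponent.mem_supp_iff _ _).mpr h1'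
              rw [if_pos hvc] at h2'
              exact Or.inl ⟨hvc, by rw [Equiv.eq_symm_apply]; exact h2'⟩
            · have hvc : v ∉ c.supp := by
                rw [SimpleGraph.ConnectedComponent.mem_supp_iff]
                intro h; rw [h] at h1'; exact hc h1'
              rw [if_neg hvc] at h2'
              exact Or.inr ⟨h1', h2'⟩
          · rintro (⟨h1', h2'⟩ | ⟨h1', h2'⟩)
            · refine ⟨Or.inl ((SimpleGraph.ConnectedComponent.mem_supp_iff _ _).mp h1'), ?_⟩
              rw [if_pos h1', h2', Equiv.apply_symm_apply]
            · have hvc : v ∉ c.supp := Set.disjoint_right.mp hdisj h1'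
              exact ⟨Or.inr h1', by rw [if_neg hvc]; exact h2'⟩
        have hdisj2 : Disjoint {v ∈ c.supp | g v = σ.symm j}
            {v | G.connectedComponentMk v ∈ s ∧ f v = j} :=
          hdisj.mono (Set.sep_subset _ _) (fun v hv => hv.1)
        rw [hsplit, Set.ncard_union_eq hdisj2 (Set.toFinite _) (Set.toFinite _),
          hsize0 (σ.symm j), hsz j, hNnew]
        have hmem : (σ.symm j ∈ B₀) ↔ j ∈ D := by
          rw [← hσ (σ.symm j), Equiv.apply_symm_apply]
        have hiff : (if σ.symm j ∈ B₀ then (1 : ℕ) else 0)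
            = (if j ∈ D then (1 : ℕ) else 0) := by
          simp only [hmem]
        rw [hiff]
        have h5 := hindic j
        omega
  obtain ⟨f, B, hf, hB, hsz⟩ := aux Finset.univ
  have hcard : {v | G.connectedComponentMk v ∈ (Finset.univ : Finset G.ConnectedComponent)}.ncard
      = Fintype.card V := by
    have : {v : V | G.connectedComponentMk v ∈ (Finset.univ : Finset G.ConnectedComponent)}
        = Set.univ := by ext v; simp
    rw [this, Set.ncard_univ, Nat.card_eq_fintype_card]
  have hmod : Fintype.card V % m = 0 := by
    obtain ⟨q, hq⟩ := hdvd
    rw [hq]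
    exact Nat.mul_mod_right m q
  have hBempty : B = ∅ := Finset.card_eq_zero.mp (by rw [hB, hcard, hmod])
  refine ⟨f, fun u v h => hf u v (Finset.mem_univ _) h, fun j => ?_⟩
  have hset : {v | G.connectedComponentMk v ∈ (Finset.univ : Finset G.ConnectedComponent)
      ∧ f v = j} = {v | f v = j} := by ext v; simp
  have := hsz j
  rw [hset, hcard, hBempty] at this
  simpa using this
end

section
/- Assume the Equitable Δ-Coloring Conjecture holds. Let k ≥ 3, let n be a positive integer divisible by k, and let F_1, …, F_{⌊n/(k(k−1))⌋} be pairwise edge-disjoint K_k-factors of the complete graph K_n, with feasibility graph G. Then G contains no K_k-factor if and only if the complement of G contains the complete graph K_{n/k+1} as a subgraph, i.e., there is a set S of n/k + 1 vertices such that every pair of distinct vertices of S lies in a common block of some round. -/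
/-- A graph is equitably `l`-colorable: there is a proper coloring with `l`
colors whose color classes pairwise differ in size by at most one. -/
def EquitablyColorable {V : Type} (G : SimpleGraph V) (l : ℕ) : Prop :=
  ∃ f : V → Fin l, (∀ u v : V, G.Adj u v → f u ≠ f v) ∧
    ∀ j j' : Fin l, {v | f v = j}.ncard ≤ {v | f v = j'}.ncard + 1

/-- The Equitable Δ-Coloring Conjecture: a connected finite graph `G` with
maximum degree at most `l` has no equitable `l`-coloring iff `G = K_{l+1}`,
or `l = 2` and `G` is an odd cycle, or `l` is odd and `G = K_{l,l}`. -/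
def EDCC : Prop :=
  ∀ (V : Type) [Fintype V] (G : SimpleGraph V) (l : ℕ),
    G.Connected → (∀ v : V, (G.neighborSet v).ncard ≤ l) →
    (¬ EquitablyColorable G l ↔
      Nonempty (G ≃g (⊤ : SimpleGraph (Fin (l + 1)))) ∨
      (l = 2 ∧ ∃ m : ℕ, 3 ≤ m ∧ Odd m ∧ Nonempty (G ≃g SimpleGraph.cycleGraph m)) ∨
      (Odd l ∧ Nonempty (G ≃g completeBipartiteGraph (Fin l) (Fin l))))

open Finset

instance instDecSameBlock {n : ℕ} (P : Finpartition (Finset.univ : Finset (Fin n)))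
    (u v : Fin n) : Decidable (SameBlock P u v) := by
  unfold SameBlock; infer_instance

/-- The conflict graph: two vertices are adjacent if they share a block in some round. -/
def conflictGraph {n r : ℕ} (F : Fin r → Finpartition (Finset.univ : Finset (Fin n))) :
    SimpleGraph (Fin n) where
  Adj u v := u ≠ v ∧ ∃ i, SameBlock (F i) u v
  symm := by
    constructor
    rintro u v ⟨huv, i, b, hb, hu, hv⟩
    exact ⟨huv.symm, i, b, hb, hv, hu⟩
  loopless := by constructor; rintro u ⟨h, _⟩; exact h rfl

instance {n r : ℕ} (F : Fin r → Finpartition (Finset.univ : Finset (Fin n))) :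
    DecidableRel (conflictGraph F).Adj :=
  fun u v => inferInstanceAs (Decidable (_ ∧ _))

lemma conflictGraph_adj {n r : ℕ} {F : Fin r → Finpartition (Finset.univ : Finset (Fin n))}
    {u v : Fin n} : (conflictGraph F).Adj u v ↔ u ≠ v ∧ ∃ i, SameBlock (F i) u v := Iff.rfl

/-- Degree bound for the conflict graph. -/
lemma conflict_deg_le {n r k : ℕ} (F : Fin r → Finpartition (Finset.univ : Finset (Fin n)))
    (hF : ∀ i, IsKkFactor k (F i)) (v : Fin n) :
    ((conflictGraph F).neighborSet v).ncard ≤ r * (k - 1) := by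
  classical
  have hex : ∀ i : Fin r, ∃ b ∈ (F i).parts, v ∈ b := fun i => (F i).exists_mem (mem_univ v)
  choose bl hbl hvbl using hex
  have hsub : (conflictGraph F).neighborSet v ⊆
      ↑(Finset.univ.biUnion fun i : Fin r => bl i \ {v}) := by
    rintro w ⟨hne, i, b, hb, hvb, hwb⟩
    have hbeq : b = bl i := (F i).eq_of_mem_parts hb (hbl i) hvb (hvbl i)
    subst hbeq
    simp only [Finset.coe_biUnion, Set.mem_iUnion, Finset.mem_coe, Finset.mem_sdiff,
      Finset.mem_singleton, Finset.coe_univ, Set.mem_univ]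
    exact ⟨i, trivial, hwb, fun h => hne (h ▸ rfl)⟩
  calc ((conflictGraph F).neighborSet v).ncard
      ≤ (↑(Finset.univ.biUnion fun i : Fin r => bl i \ {v}) : Set (Fin n)).ncard :=
        Set.ncard_le_ncard hsub (Set.toFinite _)
    _ = (Finset.univ.biUnion fun i : Fin r => bl i \ {v}).card := Set.ncard_coe_finset _
    _ ≤ ∑ i : Fin r, (bl i \ {v}).card := Finset.card_biUnion_le
    _ ≤ ∑ _i : Fin r, (k - 1) := by
        refine Finset.sum_le_sum fun i _ => ?_
        have : (bl i \ {v}).card = (bl i).card - 1 := by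
          rw [Finset.card_sdiff_of_subset (by simpa using hvbl i)]
          simp
        rw [this, hF i _ (hbl i)]
    _ = r * (k - 1) := by simp [Finset.sum_const, Finset.card_univ, mul_comm]

/-- Every edge of the conflict graph lies in a triangle (needs `3 ≤ k`). -/
lemma conflict_triangle {n r k : ℕ} {F : Fin r → Finpartition (Finset.univ : Finset (Fin n))}
    (hF : ∀ i, IsKkFactor k (F i)) (hk : 3 ≤ k) {u v : Fin n}
    (h : (conflictGraph F).Adj u v) :
    ∃ w, (conflictGraph F).Adj u w ∧ (conflictGraph F).Adj v w := by
  classical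
  obtain ⟨hne, i, b, hb, hub, hvb⟩ := h
  have hsub : {u, v} ⊆ b := by
    intro x hx; rcases Finset.mem_insert.mp hx with h | h
    · exact h ▸ hub
    · exact (Finset.mem_singleton.mp h) ▸ hvb
  have hcard : (b \ {u, v}).card = k - 2 := by
    rw [Finset.card_sdiff_of_subset hsub, hF i b hb, Finset.card_insert_of_notMem (by simp [hne]),
      Finset.card_singleton]
  have hpos : 0 < (b \ {u, v}).card := by omega
  obtain ⟨w, hw⟩ := Finset.card_pos.mp hpos
  rw [Finset.mem_sdiff] at hw
  obtain ⟨hwb, hwnot⟩ := hw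
  have hwu : w ≠ u := fun h => hwnot (by simp [h])
  have hwv : w ≠ v := fun h => hwnot (by simp [h])
  exact ⟨w, ⟨hwu.symm, i, b, hb, hub, hwb⟩, ⟨hwv.symm, i, b, hb, hvb, hwb⟩⟩

/-- A `K_k`-factor of `K_n` has exactly `n / k` parts. -/
lemma parts_card {n k : ℕ} (hk : 0 < k) (P : Finpartition (Finset.univ : Finset (Fin n)))
    (hP : IsKkFactor k P) : P.parts.card = n / k := by
  have hsum : ∑ b ∈ P.parts, b.card = n := by
    rw [P.sum_card_parts]; simp
  have hsum2 : ∑ b ∈ P.parts, b.card = P.parts.card * k := by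
    rw [Finset.sum_congr rfl hP, Finset.sum_const, smul_eq_mul]
  have h2 : P.parts.card * k = n := hsum2.symm.trans hsum
  exact (Nat.div_eq_of_eq_mul_left hk h2.symm).symm

/-- If color counts are pairwise within one and sum to `l * k`, all are `k`. -/
lemma counts_all_eq {l k : ℕ} (hl : 0 < l) (c : Fin l → ℕ)
    (hbal : ∀ j j', c j ≤ c j' + 1) (hsum : ∑ j, c j = l * k) : ∀ j, c j = k := by
  intro j0
  by_contra hne
  rcases Nat.lt_or_ge (c j0) k with hlt | hge
  · -- all c j ≤ c j0 + 1 ≤ k, and c j0 < k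
    have h1 : ∀ j ∈ Finset.univ, c j ≤ k := fun j _ => by have := hbal j j0; omega
    have hlt2 : ∑ j, c j < ∑ _j : Fin l, k :=
      Finset.sum_lt_sum h1 ⟨j0, Finset.mem_univ _, hlt⟩
    simp [Finset.sum_const, Finset.card_univ] at hlt2
    omega
  · have hgt : k < c j0 := lt_of_le_of_ne hge (Ne.symm hne)
    have h1 : ∀ j ∈ Finset.univ, k ≤ c j := fun j _ => by have := hbal j0 j; omega
    have hlt2 : ∑ _j : Fin l, k < ∑ j, c j := by
      refine Finset.sum_lt_sum h1 ⟨j0, Finset.mem_univ _, hgt⟩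
    simp [Finset.sum_const, Finset.card_univ] at hlt2
    omega

/-- Build a `K_k`-factor from a coloring whose fibers all have size `k`. -/
lemma finpartition_of_coloring {n l k : ℕ} (f : Fin n → Fin l)
    (hfib : ∀ j, (Finset.univ.filter fun x => f x = j).card = k) (hk : 0 < k) :
    ∃ P : Finpartition (Finset.univ : Finset (Fin n)),
      IsKkFactor k P ∧ ∀ u v : Fin n, SameBlock P u v → f u = f v := by
  classical
  refine ⟨⟨(Finset.univ : Finset (Fin l)).image fun j => Finset.univ.filter fun x => f x = j,
    ?_, ?_, ?_⟩, ?_, ?_⟩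
  · rw [Finset.supIndep_iff_pairwiseDisjoint]
    rintro b hb c hc hbc
    simp only [Finset.coe_image, Set.mem_image, Finset.mem_coe] at hb hc
    obtain ⟨j, _, rfl⟩ := hb
    obtain ⟨j', _, rfl⟩ := hc
    simp only [Function.onFun, id_eq]
    refine Finset.disjoint_left.mpr ?_
    intro x hx hx'
    rw [Finset.mem_filter] at hx hx'
    have hjj : j = j' := by rw [← hx.2, hx'.2]
    exact hbc (by rw [hjj])
  · apply Finset.Subset.antisymm
    · intro x hx
      rw [Finset.mem_sup] at hx
      obtain ⟨b, _, hxb⟩ := hx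
      exact Finset.mem_univ x
    · intro x _
      rw [Finset.mem_sup]
      exact ⟨Finset.univ.filter fun y => f y = f x,
        Finset.mem_image_of_mem _ (Finset.mem_univ _), by simp⟩
  · intro hbot
    simp only [Finset.bot_eq_empty, Finset.mem_image] at hbot
    obtain ⟨j, _, hj⟩ := hbot
    have := hfib j
    rw [hj] at this
    simp at this
    omega
  · intro b hb
    simp only [Finset.mem_image] at hb
    obtain ⟨j, _, rfl⟩ := hb
    exact hfib j
  · rintro u v ⟨b, hb, hub, hvb⟩
    simp only [Finset.mem_image] at hb
    obtain ⟨j, _, rfl⟩ := hb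
    simp only [Finset.mem_filter] at hub hvb
    rw [hub.2, hvb.2]

section Components

variable {V : Type} [Fintype V] [DecidableEq V] (H : SimpleGraph V) [DecidableRel H.Adj]

/-- The induced graph on a connected component is connected. -/
lemma connected_induce_supp (C : H.ConnectedComponent) : (H.induce C.supp).Connected := by
  obtain ⟨v, hv⟩ := C.exists_rep
  haveI : Nonempty ↑C.supp := ⟨⟨v, by
    rw [SimpleGraph.ConnectedComponent.mem_supp_iff]; exact hv⟩⟩
  refine ⟨fun a b => ?_⟩
  obtain ⟨x, hx⟩ := a
  obtain ⟨y, hy⟩ := b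
  · rw [SimpleGraph.ConnectedComponent.mem_supp_iff] at hx hy
    have hr : H.Reachable x y := SimpleGraph.ConnectedComponent.exact (hx.trans hy.symm)
    obtain ⟨p⟩ := hr
    have hsub : ∀ w ∈ p.support, w ∈ C.supp := by
      intro w hw
      rw [SimpleGraph.ConnectedComponent.mem_supp_iff, ← hx]
      exact (SimpleGraph.ConnectedComponent.sound (p.takeUntil w hw).reachable).symm
    have hconn := p.connected_induce_support
    have hr2 := hconn.preconnected ⟨x, p.start_mem_support⟩ ⟨y, p.end_mem_support⟩
    let hom : H.induce {w | w ∈ p.support} →g H.induce C.supp :=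
      SimpleGraph.induceHom SimpleGraph.Hom.id hsub
    have := hr2.map hom
    convert this using 2 <;> rfl

/-- Degrees don't increase when passing to an induced subgraph. -/
lemma induce_deg_le (s : Set V) (x : {a // a ∈ s}) :
    ((H.induce s).neighborSet x).ncard ≤ (H.neighborSet x.val).ncard := by
  have himg : Subtype.val '' ((H.induce s).neighborSet x) ⊆ H.neighborSet x.val := by
    rintro w ⟨y, hy, rfl⟩
    exact hy
  calc ((H.induce s).neighborSet x).ncard
      = (Subtype.val '' ((H.induce s).neighborSet x)).ncard :=
        (Set.ncard_image_of_injective _ Subtype.val_injective).symm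
    _ ≤ (H.neighborSet x.val).ncard := Set.ncard_le_ncard himg (Set.toFinite _)

end Components

/-- Merging lemma for equitable counts: permute the second family so the sum is balanced. -/
lemma merge_counts {l : ℕ} (a b : Fin l → ℕ)
    (ha : ∀ j j', a j ≤ a j' + 1) (hb : ∀ j j', b j ≤ b j' + 1) :
    ∃ σ : Equiv.Perm (Fin l), ∀ j j', a j + b (σ j) ≤ a j' + b (σ j') + 1 := by
  classical
  rcases Nat.eq_zero_or_pos l with rfl | hl
  · exact ⟨Equiv.refl _, fun j => j.elim0⟩
  haveI : Nonempty (Fin l) := ⟨⟨0, hl⟩⟩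
  have hne : (Finset.univ : Finset (Fin l)).Nonempty := Finset.univ_nonempty
  obtain ⟨ja, _, hja⟩ := Finset.exists_min_image Finset.univ a hne
  obtain ⟨jb, _, hjb⟩ := Finset.exists_min_image Finset.univ b hne
  set ma := a ja with hma
  set mb := b jb with hmb
  have hav : ∀ j, a j = ma ∨ a j = ma + 1 := fun j => by
    have h1 := hja j (Finset.mem_univ _); have h2 := ha j ja; omega
  have hbv : ∀ j, b j = mb ∨ b j = mb + 1 := fun j => by
    have h1 := hjb j (Finset.mem_univ _); have h2 := hb j jb; omega
  set A := Finset.univ.filter (fun j => a j = ma + 1) with hA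
  set B := Finset.univ.filter (fun j => b j = mb + 1) with hB
  -- choose B' : target positions for the big b-classes
  have hkey : ∃ B' : Finset (Fin l), B'.card = B.card ∧ (Disjoint A B' ∨ Aᶜ ⊆ B') := by
    by_cases hc : B.card ≤ Aᶜ.card
    · obtain ⟨B', hsub, hcard⟩ := Finset.exists_subset_card_eq hc
      exact ⟨B', hcard, Or.inl (Finset.disjoint_left.mpr fun x hxA hxB' =>
        (Finset.mem_compl.mp (hsub hxB')) hxA)⟩
    · push_neg at hc
      obtain ⟨B', hsub, _, hcard⟩ := Finset.exists_subsuperset_card_eq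
        (Finset.subset_univ Aᶜ) hc.le (Finset.card_le_univ B)
      exact ⟨B', hcard, Or.inr hsub⟩
  obtain ⟨B', hB'card, hB'prop⟩ := hkey
  -- a permutation mapping B' onto B
  have hcard1 : Fintype.card {x // x ∈ B'} = Fintype.card {x // x ∈ B} := by
    simp [Fintype.card_coe, hB'card]
  have hcard2 : Fintype.card {x // x ∉ B'} = Fintype.card {x // x ∉ B} := by
    have := Fintype.card_subtype_compl (· ∈ B')
    have := Fintype.card_subtype_compl (· ∈ B)
    omega
  let e1 : {x // x ∈ B'} ≃ {x // x ∈ B} := Fintype.equivOfCardEq hcard1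
  let e2 : {x // x ∉ B'} ≃ {x // x ∉ B} := Fintype.equivOfCardEq hcard2
  refine ⟨Equiv.subtypeCongr e1 e2, ?_⟩
  have hmem : ∀ j, (Equiv.subtypeCongr e1 e2 j ∈ B ↔ j ∈ B') := by
    intro j
    by_cases h : j ∈ B'
    · simp only [Equiv.subtypeCongr, Equiv.trans_apply, Equiv.sumCompl_symm_apply_of_pos h,
        Equiv.sumCongr_apply, Sum.map_inl, Equiv.sumCompl_apply_inl]
      exact ⟨fun _ => h, fun _ => (e1 ⟨j, h⟩).2⟩
    · simp only [Equiv.subtypeCongr, Equiv.trans_apply, Equiv.sumCompl_symm_apply_of_neg h,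
        Equiv.sumCongr_apply, Sum.map_inr, Equiv.sumCompl_apply_inr]
      exact ⟨fun hmem => absurd hmem (e2 ⟨j, h⟩).2, fun hj => absurd hj h⟩
  intro j j'
  set σ := Equiv.subtypeCongr e1 e2
  have haj : ∀ i, a i = ma + (if i ∈ A then 1 else 0) := by
    intro i
    by_cases h : i ∈ A
    · simp only [h, if_true]
      exact (Finset.mem_filter.mp h).2
    · simp only [h, if_false, add_zero]
      rcases hav i with h' | h'
      · exact h'
      · have hiA : i ∈ A := Finset.mem_filter.mpr ⟨Finset.mem_univ _, h'⟩
        exact absurd hiA h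
  have hbj : ∀ i, b (σ i) = mb + (if i ∈ B' then 1 else 0) := by
    intro i
    by_cases h : i ∈ B'
    · have : σ i ∈ B := (hmem i).mpr h
      simp only [h, if_true]
      simpa [hB] using (Finset.mem_filter.mp this).2
    · have hσ : σ i ∉ B := fun hc => h ((hmem i).mp hc)
      simp only [h, if_false, add_zero]
      rcases hbv (σ i) with h' | h'
      · exact h'
      · have hiB : σ i ∈ B := Finset.mem_filter.mpr ⟨Finset.mem_univ _, h'⟩
        exact absurd hiB hσ
  rw [haj j, haj j', hbj j, hbj j']
  rcases hB'prop with hdisj | hcover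
  · have h1 : ¬(j ∈ A ∧ j ∈ B') := fun ⟨h1, h2⟩ => Finset.disjoint_left.mp hdisj h1 h2
    by_cases hjA : j ∈ A <;> by_cases hjB : j ∈ B' <;> simp [hjA, hjB] at h1 ⊢ <;> omega
  · have h2 : j' ∈ A ∨ j' ∈ B' := by
      by_contra hcon
      push_neg at hcon
      exact hcon.2 (hcover (Finset.mem_compl.mpr hcon.1))
    by_cases hjA : j ∈ A <;> by_cases hjB : j ∈ B' <;>
      rcases h2 with h2 | h2 <;> simp [hjA, hjB, h2] <;> omega

/-- Cycles of length at least 4 contain no triangle. -/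
lemma cycle_no_triangle {m : ℕ} (hm : 2 ≤ m) {x y z : Fin (m + 2)}
    (h1 : (SimpleGraph.cycleGraph (m + 2)).Adj x y)
    (h2 : (SimpleGraph.cycleGraph (m + 2)).Adj x z)
    (h3 : (SimpleGraph.cycleGraph (m + 2)).Adj y z) : False := by
  rw [SimpleGraph.cycleGraph_adj] at h1 h2 h3
  have hone : (1 : Fin (m + 2)).val = 1 := rfl
  have h10 : (1 : Fin (m + 2)) ≠ 0 := by
    intro h
    have := congrArg Fin.val h
    rw [hone] at this
    simp at this
  have h30 : (1 + 1 + 1 : Fin (m + 2)) ≠ 0 := by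
    intro h
    have hv2 : ((1 + 1 : Fin (m + 2))).val = 2 := by
      rw [Fin.val_add, hone]
      exact Nat.mod_eq_of_lt (by omega)
    have hv3 : ((1 + 1 + 1 : Fin (m + 2))).val = 3 := by
      rw [Fin.val_add, hv2, hone]
      exact Nat.mod_eq_of_lt (by omega)
    rw [h] at hv3
    simp at hv3
  -- p := x - y, q := y - z
  have hp : x - y = 1 ∨ x - y = -1 := by
    rcases h1 with h | h
    · exact Or.inl h
    · right; rw [← neg_sub y x, h]
  have hq : y - z = 1 ∨ y - z = -1 := by
    rcases h3 with h | h
    · exact Or.inl h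
    · right; rw [← neg_sub z y, h]
  have hpq : (x - y) + (y - z) = 1 ∨ (x - y) + (y - z) = -1 := by
    rw [sub_add_sub_cancel]
    rcases h2 with h | h
    · exact Or.inl h
    · right; rw [← neg_sub z x, h]
  rcases hp with hp | hp <;> rcases hq with hq | hq <;> rw [hp, hq] at hpq <;>
    rcases hpq with h | h
  · exact h10 (add_eq_right.mp h)
  · exact h30 (eq_neg_iff_add_eq_zero.mp h)
  · rw [add_neg_cancel] at h
    exact h10 h.symm
  · rw [add_neg_cancel] at h
    exact h10 (neg_eq_zero.mp h.symm)
  · rw [neg_add_cancel] at h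
    exact h10 h.symm
  · rw [neg_add_cancel] at h
    exact h10 (neg_eq_zero.mp h.symm)
  · rw [← neg_add] at h
    exact h30 (neg_eq_iff_add_eq_zero.mp h)
  · rw [← neg_add] at h
    exact h10 (add_eq_right.mp (neg_inj.mp h))

/-- Under the EΔCC, every component of a graph in which every edge lies in a
triangle and with no `K_{l+1}` is equitably `l`-colorable. -/
lemma component_equitable {V : Type} [Fintype V] [DecidableEq V] (hEDCC : EDCC)
    (H : SimpleGraph V) [DecidableRel H.Adj] {l : ℕ}
    (hdeg : ∀ v, (H.neighborSet v).ncard ≤ l)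
    (htriangle : ∀ u v, H.Adj u v → ∃ w, H.Adj u w ∧ H.Adj v w)
    (hnoclique : ∀ S : Finset V, S.card = l + 1 →
      ¬ ∀ u ∈ S, ∀ v ∈ S, u ≠ v → H.Adj u v)
    (C : H.ConnectedComponent) :
    EquitablyColorable (H.induce C.supp) l := by
  classical
  by_contra hnc
  have hconn := connected_induce_supp H C
  have hdeg' : ∀ x : ↥C.supp, ((H.induce C.supp).neighborSet x).ncard ≤ l :=
    fun x => le_trans (induce_deg_le H C.supp x) (hdeg x.val)
  have hiff := hEDCC ↥C.supp (H.induce C.supp) l hconn hdeg'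
  have hK : ∀ _φ : (H.induce C.supp) ≃g (⊤ : SimpleGraph (Fin (l + 1))), False := by
    intro φ
    refine hnoclique C.supp.toFinset ?_ ?_
    · rw [Set.toFinset_card, ← Fintype.card_fin (l + 1)]
      exact Fintype.card_congr φ.toEquiv
    · intro u hu v hv huv
      rw [Set.mem_toFinset] at hu hv
      have hne : (⟨u, hu⟩ : ↥C.supp) ≠ ⟨v, hv⟩ := fun h => huv (congrArg Subtype.val h)
      have htop : (⊤ : SimpleGraph (Fin (l + 1))).Adj (φ ⟨u, hu⟩) (φ ⟨v, hv⟩) := by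
        simp only [SimpleGraph.top_adj]
        exact fun h => hne (φ.toEquiv.injective h)
      have hadj : (H.induce C.supp).Adj ⟨u, hu⟩ ⟨v, hv⟩ := φ.map_adj_iff.mp htop
      exact hadj
  have htri : ∀ x y : ↥C.supp, (H.induce C.supp).Adj x y →
      ∃ z : ↥C.supp, (H.induce C.supp).Adj x z ∧ (H.induce C.supp).Adj y z := by
    intro x y hxy
    obtain ⟨w, hw1, hw2⟩ := htriangle x.val y.val hxy
    have hwsupp : w ∈ C.supp := by
      rw [SimpleGraph.ConnectedComponent.mem_supp_iff]
      have hx := x.2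
      rw [SimpleGraph.ConnectedComponent.mem_supp_iff] at hx
      rw [← hx]
      exact (SimpleGraph.ConnectedComponent.sound hw1.reachable).symm
    exact ⟨⟨w, hwsupp⟩, hw1, hw2⟩
  rcases hiff.mp hnc with hcase | ⟨hl2, m, hm3, _hmodd, hcase⟩ | ⟨hlodd, hcase⟩
  · obtain ⟨φ⟩ := hcase
    exact hK φ
  · obtain ⟨φ⟩ := hcase
    subst hl2
    rcases eq_or_lt_of_le hm3 with hm3' | hm4
    · subst hm3'
      rw [SimpleGraph.cycleGraph_three_eq_top] at φ
      exact hK φ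
    · obtain ⟨m', rfl⟩ : ∃ m', m = m' + 2 := ⟨m - 2, by omega⟩
      have hedge : (SimpleGraph.cycleGraph (m' + 2)).Adj 1 0 := by
        rw [SimpleGraph.cycleGraph_adj]
        left
        simp
      have hxy : (H.induce C.supp).Adj (φ.symm 1) (φ.symm 0) := φ.symm.map_adj_iff.mpr hedge
      obtain ⟨z, hxz, hyz⟩ := htri _ _ hxy
      have h1 : (SimpleGraph.cycleGraph (m' + 2)).Adj 1 (φ z) := by
        have := φ.map_adj_iff.mpr hxz
        rwa [RelIso.apply_symm_apply] at this
      have h2 : (SimpleGraph.cycleGraph (m' + 2)).Adj 0 (φ z) := by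
        have := φ.map_adj_iff.mpr hyz
        rwa [RelIso.apply_symm_apply] at this
      exact cycle_no_triangle (by omega) hedge h1 h2
  · obtain ⟨φ⟩ := hcase
    have hl1 : 0 < l := by
      rcases hlodd with ⟨t, ht⟩
      omega
    have hedge : (completeBipartiteGraph (Fin l) (Fin l)).Adj
        (Sum.inl ⟨0, hl1⟩) (Sum.inr ⟨0, hl1⟩) := by simp
    have hxy : (H.induce C.supp).Adj (φ.symm (Sum.inl ⟨0, hl1⟩)) (φ.symm (Sum.inr ⟨0, hl1⟩)) :=
      φ.symm.map_adj_iff.mpr hedge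
    obtain ⟨z, hxz, hyz⟩ := htri _ _ hxy
    have h1 : (completeBipartiteGraph (Fin l) (Fin l)).Adj (Sum.inl ⟨0, hl1⟩) (φ z) := by
      have := φ.map_adj_iff.mpr hxz
      rwa [RelIso.apply_symm_apply] at this
    have h2 : (completeBipartiteGraph (Fin l) (Fin l)).Adj (Sum.inr ⟨0, hl1⟩) (φ z) := by
      have := φ.map_adj_iff.mpr hyz
      rwa [RelIso.apply_symm_apply] at this
    rcases hz : φ z with c | c
    · rw [hz] at h1
      simp at h1
    · rw [hz] at h2
      simp at h2

/-- Vertex sets closed under adjacency are closed under reachability. -/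
lemma closed_reach {V : Type} {H : SimpleGraph V} {s : Finset V}
    (hs : ∀ u ∈ s, ∀ v, H.Adj u v → v ∈ s) {u w : V} (p : H.Walk u w) :
    u ∈ s → w ∈ s := by
  induction p with
  | nil => exact id
  | cons h q ih => exact fun hu => ih (hs _ hu _ h)

/-- Gluing equitable colorings of the components: strong induction form. -/
lemma glue_aux {V : Type} [Fintype V] [DecidableEq V] (H : SimpleGraph V) [DecidableRel H.Adj]
    {l : ℕ} (hl : 0 < l)
    (hcomp : ∀ C : H.ConnectedComponent, EquitablyColorable (H.induce C.supp) l) :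
    ∀ s : Finset V, (∀ u ∈ s, ∀ v, H.Adj u v → v ∈ s) →
      ∃ f : V → Fin l, (∀ u v : V, u ∈ s → v ∈ s → H.Adj u v → f u ≠ f v) ∧
        ∀ j j' : Fin l,
          (s.filter fun x => f x = j).card ≤ (s.filter fun x => f x = j').card + 1 := by
  intro s
  induction s using Finset.strongInduction with
  | _ s ih =>
    intro hs
    rcases Finset.eq_empty_or_nonempty s with rfl | ⟨v, hv⟩
    · exact ⟨fun _ => ⟨0, hl⟩, fun u v hu _ _ => absurd hu (Finset.notMem_empty u),
        fun j j' => by simp⟩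
    set C := H.connectedComponentMk v with hC
    have hsupp_sub : C.supp.toFinset ⊆ s := by
      intro w hw
      rw [Set.mem_toFinset, SimpleGraph.ConnectedComponent.mem_supp_iff] at hw
      have hr : H.Reachable v w := SimpleGraph.ConnectedComponent.exact (by rw [hw])
      exact closed_reach hs hr.some hv
    set t := C.supp.toFinset with ht
    have hvt : v ∈ t := by
      rw [ht, Set.mem_toFinset, SimpleGraph.ConnectedComponent.mem_supp_iff]
    have hssub : s \ t ⊂ s := Finset.sdiff_ssubset hsupp_sub ⟨v, hvt⟩
    have hclosed' : ∀ u ∈ s \ t, ∀ w, H.Adj u w → w ∈ s \ t := by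
      intro u hu w hadj
      rw [Finset.mem_sdiff] at hu ⊢
      refine ⟨hs u hu.1 w hadj, fun hwt => hu.2 ?_⟩
      rw [ht, Set.mem_toFinset, SimpleGraph.ConnectedComponent.mem_supp_iff] at hwt ⊢
      rw [← hwt]
      exact SimpleGraph.ConnectedComponent.sound hadj.reachable
    obtain ⟨f2, hf2p, hf2b⟩ := ih (s \ t) hssub hclosed'
    obtain ⟨g, hgp, hgb⟩ := hcomp C
    set f1 : V → Fin l := fun x => if h : x ∈ C.supp then g ⟨x, h⟩ else ⟨0, hl⟩ with hf1
    have hcount1 : ∀ j, (t.filter fun x => f1 x = j).card = {x | g x = j}.ncard := by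
      intro j
      rw [Set.ncard_eq_toFinset_card']
      refine (Finset.card_bij (fun x _ => x.val) ?_ ?_ ?_).symm
      · intro x hx
        rw [Set.mem_toFinset, Set.mem_setOf_eq] at hx
        rw [Finset.mem_filter]
        refine ⟨by rw [ht, Set.mem_toFinset]; exact x.2, ?_⟩
        rw [hf1]
        simp only [x.2, dif_pos]
        rw [Subtype.coe_eta]
        exact hx
      · intro x _ y _ hxy
        exact Subtype.val_injective hxy
      · intro y hy
        rw [Finset.mem_filter] at hy
        obtain ⟨hyt, hyf⟩ := hy
        rw [ht, Set.mem_toFinset] at hyt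
        refine ⟨⟨y, hyt⟩, ?_, rfl⟩
        rw [Set.mem_toFinset, Set.mem_setOf_eq]
        rw [hf1] at hyf
        simpa only [hyt, dif_pos] using hyf
    set a : Fin l → ℕ := fun j => (t.filter fun x => f1 x = j).card with ha
    set b : Fin l → ℕ := fun j => ((s \ t).filter fun x => f2 x = j).card with hb
    have hab : ∀ j j', a j ≤ a j' + 1 := by
      intro j j'
      rw [ha]
      simp only
      rw [hcount1, hcount1]
      exact hgb j j'
    obtain ⟨τ, hτ⟩ := merge_counts a b hab hf2b
    refine ⟨fun x => if x ∈ t then f1 x else τ.symm (f2 x), ?_, ?_⟩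
    · intro p q hp hq hadj
      by_cases hpt : p ∈ t <;> by_cases hqt : q ∈ t
      · simp only [hpt, hqt, if_true]
        have hpC : p ∈ C.supp := by rwa [ht, Set.mem_toFinset] at hpt
        have hqC : q ∈ C.supp := by rwa [ht, Set.mem_toFinset] at hqt
        have := hgp ⟨p, hpC⟩ ⟨q, hqC⟩ hadj
        rw [hf1]
        simpa only [hpC, hqC, dif_pos] using this
      · exfalso
        apply hqt
        have hpC : p ∈ C.supp := by rwa [ht, Set.mem_toFinset] at hpt
        rw [ht, Set.mem_toFinset]
        rw [SimpleGraph.ConnectedComponent.mem_supp_iff] at hpC ⊢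
        rw [← hpC]
        exact (SimpleGraph.ConnectedComponent.sound hadj.reachable).symm
      · exfalso
        apply hpt
        have hqC : q ∈ C.supp := by rwa [ht, Set.mem_toFinset] at hqt
        rw [ht, Set.mem_toFinset]
        rw [SimpleGraph.ConnectedComponent.mem_supp_iff] at hqC ⊢
        rw [← hqC]
        exact SimpleGraph.ConnectedComponent.sound hadj.reachable
      · simp only [hpt, hqt, if_false]
        intro heq
        exact hf2p p q (Finset.mem_sdiff.mpr ⟨hp, hpt⟩) (Finset.mem_sdiff.mpr ⟨hq, hqt⟩) hadj
          (τ.symm.injective heq)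
    · intro j j'
      have hsplit : ∀ j0 : Fin l,
          (s.filter fun x => (if x ∈ t then f1 x else τ.symm (f2 x)) = j0).card
            = a j0 + b (τ j0) := by
        intro j0
        have hunion : s = t ∪ (s \ t) := (Finset.union_sdiff_of_subset hsupp_sub).symm
        rw [hunion, Finset.filter_union, Finset.card_union_of_disjoint
          (Finset.disjoint_filter_filter Finset.disjoint_sdiff)]
        congr 1
        · rw [ha]
          simp only
          apply congrArg
          apply Finset.filter_congr
          intro x hx
          simp only [hx, if_true]
        · rw [hb]
          simp only
          apply congrArg
          apply Finset.filter_congr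
          intro x hx
          have hxt : x ∉ t := (Finset.mem_sdiff.mp hx).2
          simp only [hxt, if_false]
          rw [Equiv.symm_apply_eq]
      rw [hsplit j, hsplit j']
      exact hτ j j'

/-- Gluing equitable colorings of the components. -/
lemma glue_coloring {V : Type} [Fintype V] [DecidableEq V] (H : SimpleGraph V)
    [DecidableRel H.Adj] {l : ℕ} (hl : 0 < l)
    (hcomp : ∀ C : H.ConnectedComponent, EquitablyColorable (H.induce C.supp) l) :
    ∃ f : V → Fin l, (∀ u v : V, H.Adj u v → f u ≠ f v) ∧
      ∀ j j' : Fin l, (Finset.univ.filter fun x => f x = j).card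
        ≤ (Finset.univ.filter fun x => f x = j').card + 1 := by
  obtain ⟨f, hp, hb⟩ := glue_aux H hl hcomp Finset.univ (fun _ _ w _ => Finset.mem_univ w)
  exact ⟨f, fun u v h => hp u v (Finset.mem_univ u) (Finset.mem_univ v) h, hb⟩

/-- Assuming EΔCC: a tournament of `⌊n/(k(k−1))⌋` pairwise edge-disjoint
`K_k`-factors of `K_n` cannot be extended iff some set of `n/k + 1` vertices
has all its pairs already in a common block (i.e. the complement of the
feasibility graph contains `K_{n/k+1}`). -/
theorem stuck_characterization_of_EDCC (hEDCC : EDCC)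
    (k n : ℕ) (hk : 3 ≤ k) (hn : 0 < n) (hkn : k ∣ n)
    (F : Fin (n / (k * (k - 1))) → Finpartition (Finset.univ : Finset (Fin n)))
    (hF : ∀ i, IsKkFactor k (F i))
    (hdisj : ∀ i j, i ≠ j → RoundsEdgeDisjoint (F i) (F j)) :
    (¬ ∃ P : Finpartition (Finset.univ : Finset (Fin n)),
        IsKkFactor k P ∧ ∀ i, RoundsEdgeDisjoint P (F i)) ↔
      ∃ S : Finset (Fin n), S.card = n / k + 1 ∧
        ∀ u ∈ S, ∀ v ∈ S, u ≠ v → ∃ i, SameBlock (F i) u v := by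
  classical
  have hk0 : 0 < k := by omega
  have hkle : k ≤ n := Nat.le_of_dvd hn hkn
  have hl1 : 1 ≤ n / k := (Nat.one_le_div_iff hk0).mpr hkle
  have hlk : n / k * k = n := Nat.div_mul_cancel hkn
  have hdeg : ∀ v, ((conflictGraph F).neighborSet v).ncard ≤ n / k := by
    intro v
    refine le_trans (conflict_deg_le F hF v) ?_
    calc n / (k * (k - 1)) * (k - 1) = n / k / (k - 1) * (k - 1) := by
          rw [Nat.div_div_eq_div_mul]
      _ ≤ n / k := Nat.div_mul_le_self _ _
  constructor
  · intro hno
    by_contra hnoS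
    apply hno
    have hnoclique : ∀ S : Finset (Fin n), S.card = n / k + 1 →
        ¬ ∀ u ∈ S, ∀ v ∈ S, u ≠ v → (conflictGraph F).Adj u v := by
      intro S hcard hpair
      exact hnoS ⟨S, hcard, fun u hu v hv huv => (hpair u hu v hv huv).2⟩
    have htriangle : ∀ u v, (conflictGraph F).Adj u v →
        ∃ w, (conflictGraph F).Adj u w ∧ (conflictGraph F).Adj v w :=
      fun u v h => conflict_triangle hF hk h
    have hcomp : ∀ C : (conflictGraph F).ConnectedComponent,
        EquitablyColorable ((conflictGraph F).induce C.supp) (n / k) :=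
      fun C => component_equitable hEDCC (conflictGraph F) hdeg htriangle hnoclique C
    obtain ⟨f, hfp, hfb⟩ := glue_coloring (conflictGraph F) hl1 hcomp
    have hsum : ∑ j : Fin (n / k), (Finset.univ.filter fun x => f x = j).card
        = n / k * k := by
      rw [← Finset.card_eq_sum_card_fiberwise (fun x _ => Finset.mem_univ (f x))]
      simp [hlk]
    have hfib : ∀ j, (Finset.univ.filter fun x => f x = j).card = k :=
      counts_all_eq hl1 _ hfb hsum
    obtain ⟨P, hPk, hPsb⟩ := finpartition_of_coloring f hfib (by omega)
    refine ⟨P, hPk, fun i u v huv hsbP hsbF => ?_⟩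
    have hfeq : f u = f v := hPsb u v hsbP
    have hadj : (conflictGraph F).Adj u v := ⟨huv, i, hsbF⟩
    exact hfp u v hadj hfeq
  · rintro ⟨S, hScard, hSpair⟩ ⟨P, hPk, hPd⟩
    have hparts : P.parts.card = n / k := parts_card hk0 P hPk
    have hlt : P.parts.card < S.card := by rw [hparts, hScard]; omega
    have hmaps : ∀ u ∈ S, (P.exists_mem (Finset.mem_univ u)).choose ∈ P.parts :=
      fun u _ => (P.exists_mem (Finset.mem_univ u)).choose_spec.1
    obtain ⟨u, hu, v, hv, hne, heq⟩ :=
      Finset.exists_ne_map_eq_of_card_lt_of_maps_to hlt hmaps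
    have hsbP : SameBlock P u v :=
      ⟨(P.exists_mem (Finset.mem_univ u)).choose,
        (P.exists_mem (Finset.mem_univ u)).choose_spec.1,
        (P.exists_mem (Finset.mem_univ u)).choose_spec.2,
        heq ▸ (P.exists_mem (Finset.mem_univ v)).choose_spec.2⟩
    obtain ⟨i, hsbF⟩ := hSpair u hu v hv hne
    exact hPd i u v hne hsbP hsbF
end
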